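/- arXiv:1110.1273 — 7 statements merged into one kernel-verified Lean document; each statement's English description precedes it below -/
import Mathlib

section
/- Let d ≥ 1, β ∈ ℝ, and A : [0,∞) × ℝ^d → ℝ. Suppose V, V̄ : [0,∞) × ℝ^d → ℝ are such that t ↦ V(t,0) is continuous and, for all t ≥ 0 and x ∈ ℝ^d, V(t,x) = A(t,x) − ∫₀ᵗ V(s,0) ds and V̄(t,x) = A(t,x) − β·t. Then for all t ≥ 0 and x ∈ ℝ^d: (i) V(t,x) − V(t,0) = V̄(t,x) − V̄(t,0); and (ii) V(t,x) = V̄(t,x) − e^{−t} ∫₀ᵗ e^{s} V̄(s,0) ds + β(1 − e^{−t}). -/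
open intervalIntegral

/-- Lemma 4.4 (L-VV) in abstract form: if `V(t,x) = A(t,x) − ∫₀ᵗ V(s,0) ds` and
`V̄(t,x) = A(t,x) − β·t`, with `t ↦ V(t,0)` continuous on `[0,∞)`, then
`V(t,x) − V(t,0) = V̄(t,x) − V̄(t,0)` and
`V(t,x) = V̄(t,x) − e^{−t} ∫₀ᵗ e^{s} V̄(s,0) ds + β(1 − e^{−t})`. -/
theorem stmt_3 (d : ℕ) (hd : 1 ≤ d) (β : ℝ)
    (A V Vbar : ℝ → (Fin d → ℝ) → ℝ)
    (hVcont : ContinuousOn (fun t => V t 0) (Set.Ici 0))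
    (hV : ∀ t ≥ (0 : ℝ), ∀ x : Fin d → ℝ, V t x = A t x - ∫ s in (0 : ℝ)..t, V s 0)
    (hVbar : ∀ t ≥ (0 : ℝ), ∀ x : Fin d → ℝ, Vbar t x = A t x - β * t) :
    ∀ t ≥ (0 : ℝ), ∀ x : Fin d → ℝ,
      V t x - V t 0 = Vbar t x - Vbar t 0 ∧
      V t x = Vbar t x - Real.exp (-t) * (∫ s in (0 : ℝ)..t, Real.exp s * Vbar s 0)
        + β * (1 - Real.exp (-t)) := by
  -- Continuous extension of s ↦ V s 0 to all of ℝ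
  set W : ℝ → ℝ := fun s => V (max s 0) 0 with hWdef
  have hmax : Continuous fun s : ℝ => max s 0 := by fun_prop
  have hWcont : Continuous W := by
    apply hVcont.comp_continuous hmax
    intro x; exact Set.mem_Ici.mpr (le_max_right x 0)
  -- Its primitive
  set G : ℝ → ℝ := fun t => ∫ s in (0 : ℝ)..t, W s with hGdef
  have hGderiv : ∀ s : ℝ, HasDerivAt G (W s) s := fun s =>
    (intervalIntegral.integral_hasStrictDerivAt_right
      (hWcont.intervalIntegrable _ _) (hWcont.stronglyMeasurableAtFilter _ _)
      hWcont.continuousAt).hasDerivAt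
  have hGcont : Continuous G :=
    continuous_iff_continuousAt.2 fun s => (hGderiv s).continuousAt
  -- On [0,t], G agrees with the original integral
  have hGeq : ∀ t ≥ (0 : ℝ), (∫ s in (0 : ℝ)..t, V s 0) = G t := by
    intro t ht
    apply intervalIntegral.integral_congr
    intro s hs
    rw [Set.uIcc_of_le ht] at hs
    simp only [hWdef]
    rw [max_eq_left hs.1]
  -- V t x = A t x − G t for t ≥ 0
  have hVG : ∀ t ≥ (0 : ℝ), ∀ x, V t x = A t x - G t := by
    intro t ht x; rw [hV t ht x, hGeq t ht]
  intro t ht x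
  constructor
  · rw [hVG t ht x, hVG t ht 0, hVbar t ht x, hVbar t ht 0]; ring
  -- key computation of the integral
  have key : (∫ s in (0 : ℝ)..t, Real.exp s * Vbar s 0)
      = Real.exp t * G t - β * (t * Real.exp t - Real.exp t + 1) := by
    have hcongr : (∫ s in (0 : ℝ)..t, Real.exp s * Vbar s 0)
        = ∫ s in (0 : ℝ)..t, (Real.exp s * (W s + G s) - β * (s * Real.exp s)) := by
      apply intervalIntegral.integral_congr
      intro s hs
      rw [Set.uIcc_of_le ht] at hs
      have hs0 : (0 : ℝ) ≤ s := hs.1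
      have hW : W s = V s 0 := by simp only [hWdef]; rw [max_eq_left hs0]
      show Real.exp s * Vbar s 0 = Real.exp s * (W s + G s) - β * (s * Real.exp s)
      rw [hVbar s hs0 0, hW]
      have : A s 0 = V s 0 + G s := by rw [hVG s hs0 0]; ring
      rw [this]; ring
    rw [hcongr]
    have hint1 : (∫ s in (0 : ℝ)..t, Real.exp s * (W s + G s)) = Real.exp t * G t := by
      have := intervalIntegral.integral_eq_sub_of_hasDerivAt
        (f := fun s => Real.exp s * G s)
        (f' := fun s => Real.exp s * (W s + G s))
        (a := 0) (b := t)
        (fun s _ => by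
          have h := (Real.hasDerivAt_exp s).mul (hGderiv s)
          exact h.congr_deriv (by ring))
        ((Real.continuous_exp.mul (hWcont.add hGcont)).intervalIntegrable _ _)
      rw [this]
      have hG0 : G 0 = 0 := by simp [hGdef]
      show Real.exp t * G t - Real.exp 0 * G 0 = Real.exp t * G t
      rw [hG0]; ring
    have hint2 : (∫ s in (0 : ℝ)..t, s * Real.exp s)
        = t * Real.exp t - Real.exp t + 1 := by
      have := intervalIntegral.integral_eq_sub_of_hasDerivAt
        (f := fun s => s * Real.exp s - Real.exp s)
        (f' := fun s => s * Real.exp s)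
        (a := 0) (b := t)
        (fun s _ => by
          have h := ((hasDerivAt_id s).mul (Real.hasDerivAt_exp s)).sub
            (Real.hasDerivAt_exp s)
          convert h using 1
          · rfl
          · simp only [id_eq]; ring)
        ((continuous_id.mul Real.continuous_exp).intervalIntegrable _ _)
      rw [this]
      show t * Real.exp t - Real.exp t - (0 * Real.exp 0 - Real.exp 0)
        = t * Real.exp t - Real.exp t + 1
      simp
    have hsub := intervalIntegral.integral_sub
        (f := fun s => Real.exp s * (W s + G s))
        (g := fun s => β * (s * Real.exp s)) (a := 0) (b := t) (μ := MeasureTheory.volume)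
        ((Real.continuous_exp.mul (hWcont.add hGcont)).intervalIntegrable _ _)
        ((continuous_const.mul (continuous_id.mul Real.continuous_exp)).intervalIntegrable _ _)
    have hmul := intervalIntegral.integral_const_mul (a := (0:ℝ)) (b := t)
        (r := β) (f := fun s => s * Real.exp s) (μ := MeasureTheory.volume)
    rw [hsub, hint1, hmul, hint2]
  rw [hVG t ht x, hVbar t ht x, key]
  rw [Real.exp_neg]
  field_simp
  ring
end

section
/- Let d ≥ 1, β, c ∈ ℝ, V* : ℝ^d → ℝ with V*(0) = 0, and V, V̄ : [0,∞) × ℝ^d → ℝ with t ↦ V̄(t,0) continuous. Assume V(t,x) = V̄(t,x) − e^{−t} ∫₀ᵗ e^{s} V̄(s,0) ds + β(1 − e^{−t}) for all t ≥ 0 and x ∈ ℝ^d, and that for every x ∈ ℝ^d, V̄(t,x) → V*(x) + c as t → ∞. Then for every x ∈ ℝ^d, V(t,x) → V*(x) + β as t → ∞. -/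
open Filter intervalIntegral MeasureTheory

lemma exp_mul_intervalIntegrable (g : ℝ → ℝ) (hg : ContinuousOn g (Set.Ici 0))
    {a b : ℝ} (ha : 0 ≤ a) (hb : 0 ≤ b) :
    IntervalIntegrable (fun s => Real.exp s * g s) volume a b := by
  apply ContinuousOn.intervalIntegrable
  apply (Real.continuous_exp.continuousOn.mul hg).mono
  intro y hy
  rw [Set.mem_uIcc] at hy
  rcases hy with ⟨h1, _⟩ | ⟨h1, _⟩
  · exact le_trans ha h1
  · exact le_trans hb h1

lemma exp_avg_tendsto_zero (g : ℝ → ℝ) (hg : ContinuousOn g (Set.Ici 0))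
    (h0 : Tendsto g atTop (nhds 0)) :
    Tendsto (fun t => Real.exp (-t) * ∫ s in (0 : ℝ)..t, Real.exp s * g s)
      atTop (nhds 0) := by
  rw [Metric.tendsto_atTop] at h0 ⊢
  intro ε hε
  obtain ⟨T₀, hT₀⟩ := h0 (ε / 2) (by linarith)
  set T := max T₀ 0 with hT
  have hT0 : (0 : ℝ) ≤ T := le_max_right _ _
  set A := ∫ s in (0 : ℝ)..T, Real.exp s * g s with hA
  have hexp : Tendsto (fun t : ℝ => Real.exp (-t) * |A|) atTop (nhds 0) := by
    simpa using (Real.tendsto_exp_neg_atTop_nhds_zero.mul_const |A|)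
  rw [Metric.tendsto_atTop] at hexp
  obtain ⟨N₁, hN₁⟩ := hexp (ε / 2) (by linarith)
  refine ⟨max T N₁, fun t ht => ?_⟩
  have htT : T ≤ t := le_trans (le_max_left _ _) ht
  have ht0 : (0 : ℝ) ≤ t := le_trans hT0 htT
  have hsplit : (∫ s in (0 : ℝ)..t, Real.exp s * g s)
      = A + ∫ s in T..t, Real.exp s * g s := by
    rw [hA, integral_add_adjacent_intervals (exp_mul_intervalIntegrable g hg le_rfl hT0)
      (exp_mul_intervalIntegrable g hg hT0 ht0)]
  have hb1 : |∫ s in T..t, Real.exp s * g s| ≤ (ε / 2) * (Real.exp t - Real.exp T) := by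
    calc |∫ s in T..t, Real.exp s * g s| ≤ ∫ s in T..t, |Real.exp s * g s| :=
          intervalIntegral.abs_integral_le_integral_abs htT
      _ ≤ ∫ s in T..t, Real.exp s * (ε / 2) := by
          apply intervalIntegral.integral_mono_on htT
          · exact (exp_mul_intervalIntegrable g hg hT0 ht0).abs
          · exact (Real.continuous_exp.mul continuous_const).intervalIntegrable T t
          · intro s hs
            rw [abs_mul, abs_of_pos (Real.exp_pos s)]
            refine mul_le_mul_of_nonneg_left ?_ (Real.exp_pos s).le
            have := hT₀ s (le_trans (le_max_left _ _) hs.1)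
            rw [Real.dist_eq, sub_zero] at this
            exact this.le
      _ = (ε / 2) * (Real.exp t - Real.exp T) := by
          rw [intervalIntegral.integral_mul_const, integral_exp]; ring
  have hNA := hN₁ t (le_trans (le_max_right _ _) ht)
  rw [Real.dist_eq, sub_zero, abs_of_nonneg (by positivity)] at hNA
  have hte : Real.exp (-t) * Real.exp t = 1 := by
    rw [← Real.exp_add]; simp
  have hexpT : (0 : ℝ) < Real.exp T := Real.exp_pos T
  have hexpt : (0 : ℝ) < Real.exp (-t) := Real.exp_pos _
  rw [Real.dist_eq, sub_zero, hsplit]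
  calc |Real.exp (-t) * (A + ∫ s in T..t, Real.exp s * g s)|
      = Real.exp (-t) * |A + ∫ s in T..t, Real.exp s * g s| := by
        rw [abs_mul, abs_of_pos hexpt]
    _ ≤ Real.exp (-t) * (|A| + |∫ s in T..t, Real.exp s * g s|) := by
        apply mul_le_mul_of_nonneg_left (abs_add_le _ _) hexpt.le
    _ ≤ Real.exp (-t) * |A| + Real.exp (-t) * ((ε / 2) * (Real.exp t - Real.exp T)) := by
        rw [mul_add]
        exact add_le_add le_rfl (mul_le_mul_of_nonneg_left hb1 hexpt.le)
    _ < ε / 2 + ε / 2 := by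
        refine add_lt_add_of_lt_of_le hNA ?_
        nlinarith [mul_pos hexpt hexpT, hte, hε.le]
    _ = ε := by ring

/-- Deduction of the main theorem: if
`V(t,x) = V̄(t,x) − e^{−t} ∫₀ᵗ e^{s} V̄(s,0) ds + β(1 − e^{−t})`, `t ↦ V̄(t,0)` is
continuous, `V*(0) = 0` and `V̄(t,x) → V*(x) + c` as `t → ∞` for every `x`, then
`V(t,x) → V*(x) + β` as `t → ∞` for every `x`. -/
theorem stmt_4 (d : ℕ) (hd : 1 ≤ d) (β c : ℝ)
    (Vstar : (Fin d → ℝ) → ℝ) (hVstar0 : Vstar 0 = 0)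
    (V Vbar : ℝ → (Fin d → ℝ) → ℝ)
    (hcont : ContinuousOn (fun t => Vbar t 0) (Set.Ici 0))
    (hrel : ∀ t ≥ (0 : ℝ), ∀ x : Fin d → ℝ,
      V t x = Vbar t x - Real.exp (-t) * (∫ s in (0 : ℝ)..t, Real.exp s * Vbar s 0)
        + β * (1 - Real.exp (-t)))
    (hconv : ∀ x : Fin d → ℝ, Tendsto (fun t => Vbar t x) atTop (nhds (Vstar x + c))) :
    ∀ x : Fin d → ℝ, Tendsto (fun t => V t x) atTop (nhds (Vstar x + β)) := by
  intro x
  have hc0 : Tendsto (fun t => Vbar t 0) atTop (nhds c) := by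
    simpa [hVstar0] using hconv 0
  set g : ℝ → ℝ := fun s => Vbar s 0 - c with hgdef
  have hgc : ContinuousOn g (Set.Ici 0) := hcont.sub continuousOn_const
  have hg0 : Tendsto g atTop (nhds 0) := by
    simpa using hc0.sub_const c
  have key := exp_avg_tendsto_zero g hgc hg0
  have h1 : Tendsto (fun t : ℝ => 1 - Real.exp (-t)) atTop (nhds 1) := by
    simpa using (tendsto_const_nhds.sub Real.tendsto_exp_neg_atTop_nhds_zero)
  have hF : Tendsto (fun t => Vbar t x
      - Real.exp (-t) * (∫ s in (0 : ℝ)..t, Real.exp s * g s)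
      - c * (1 - Real.exp (-t)) + β * (1 - Real.exp (-t)))
      atTop (nhds (Vstar x + β)) := by
    have h2 : Vstar x + β = Vstar x + c - 0 - c * 1 + β * 1 := by ring
    rw [h2]
    exact (((hconv x).sub key).sub (h1.const_mul c)).add (h1.const_mul β)
  refine hF.congr' ?_
  filter_upwards [eventually_ge_atTop (0 : ℝ)] with t ht
  rw [hrel t ht x]
  have hi : (∫ s in (0 : ℝ)..t, Real.exp s * Vbar s 0)
      = (∫ s in (0 : ℝ)..t, Real.exp s * g s) + c * (Real.exp t - 1) := by
    have hint1 := exp_mul_intervalIntegrable g hgc le_rfl ht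
    have hint2 : IntervalIntegrable (fun s => Real.exp s * c) volume 0 t :=
      (Real.continuous_exp.mul continuous_const).intervalIntegrable 0 t
    have heq : ∀ s ∈ Set.uIcc (0 : ℝ) t,
        Real.exp s * Vbar s 0 = Real.exp s * g s + Real.exp s * c := by
      intro s _; simp [hgdef]; ring
    rw [intervalIntegral.integral_congr heq, intervalIntegral.integral_add hint1 hint2,
      intervalIntegral.integral_mul_const, integral_exp, Real.exp_zero]
    ring
  rw [hi]
  have hte : Real.exp (-t) * Real.exp t = 1 := by
    rw [← Real.exp_add]; simp
  linear_combination c * hte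
end

section
/- Let d ≥ 1, let D ⊂ ℝ^d be a bounded set, let a < b be reals, and let Ψ : [0,∞) × ℝ^d → ℝ. Suppose there exists r > 0 such that |Ψ(t,x) − Ψ(t,y)| ≤ (b−a)/4 for all t ≥ 0, all x ∈ D and all y with |y − x| ≤ 2r. Let (t_n)_{n≥1} ⊂ [0,∞) and (x_n)_{n≥1} ⊂ D be sequences such that Ψ(t_{2k−1}, x_{2k−1}) ≤ a and Ψ(t_{2k}, x_{2k}) ≥ b for all k ≥ 1. Then there exist open balls G′ and G″ of radius r in ℝ^d and a strictly increasing sequence k₁ < k₂ < ⋯ of positive integers such that for every j: Ψ(t_{2k_j−1}, x) ≤ (3a+b)/4 for all x ∈ G′, and Ψ(t_{2k_j}, x) ≥ (a+3b)/4 for all x ∈ G″. -/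
/-- Equicontinuity-and-pigeonhole lemma from the alternate proof of Theorem 4.5:
if `Ψ` oscillates below `a` and above `b` along sequences `(t_n)`, `(x_n)` with
`x_n` in a bounded set `D`, and `Ψ(t,·)` has oscillation at most `(b−a)/4` on
`2r`-balls around points of `D` uniformly in `t ≥ 0`, then along a subsequence the
oscillation occurs uniformly on two fixed open balls of radius `r`. -/
theorem stmt_6 (d : ℕ) (hd : 1 ≤ d) (D : Set (EuclideanSpace ℝ (Fin d)))
    (hD : Bornology.IsBounded D) (a b : ℝ) (hab : a < b)
    (Ψ : ℝ → EuclideanSpace ℝ (Fin d) → ℝ) (r : ℝ) (hr : 0 < r)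
    (hosc : ∀ t ≥ (0 : ℝ), ∀ x ∈ D, ∀ y : EuclideanSpace ℝ (Fin d),
      ‖y - x‖ ≤ 2 * r → |Ψ t x - Ψ t y| ≤ (b - a) / 4)
    (ts : ℕ → ℝ) (hts : ∀ n ≥ 1, 0 ≤ ts n)
    (xs : ℕ → EuclideanSpace ℝ (Fin d)) (hxs : ∀ n ≥ 1, xs n ∈ D)
    (hlow : ∀ k ≥ 1, Ψ (ts (2 * k - 1)) (xs (2 * k - 1)) ≤ a)
    (hhigh : ∀ k ≥ 1, b ≤ Ψ (ts (2 * k)) (xs (2 * k))) :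
    ∃ y' y'' : EuclideanSpace ℝ (Fin d), ∃ κ : ℕ → ℕ,
      StrictMono κ ∧ (∀ j, 1 ≤ κ j) ∧
      ∀ j, (∀ x ∈ Metric.ball y' r, Ψ (ts (2 * κ j - 1)) x ≤ (3 * a + b) / 4) ∧
           (∀ x ∈ Metric.ball y'' r, (a + 3 * b) / 4 ≤ Ψ (ts (2 * κ j)) x) := by
  -- finite cover of D by r-balls
  have htb : TotallyBounded D :=
    hD.isCompact_closure.totallyBounded.subset subset_closure
  obtain ⟨t, htfin, htsub⟩ := Metric.totallyBounded_iff.mp htb r hr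
  have hch : ∀ n ≥ 1, ∃ c ∈ t, xs n ∈ Metric.ball c r := by
    intro n hn
    have := htsub (hxs n hn)
    simpa using this
  choose! c hct hcb using hch
  -- pigeonhole: some pair of centers recurs infinitely often
  have key : ∃ p ∈ t, ∃ q ∈ t,
      {k : ℕ | 1 ≤ k ∧ c (2 * k - 1) = p ∧ c (2 * k) = q}.Infinite := by
    by_contra h
    push_neg at h
    have hfin : (Set.Ici 1 : Set ℕ).Finite := by
      have hsub : (Set.Ici 1 : Set ℕ) ⊆
          ⋃ p ∈ t, ⋃ q ∈ t, {k : ℕ | 1 ≤ k ∧ c (2 * k - 1) = p ∧ c (2 * k) = q} := by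
        intro k hk
        have hk' : (1:ℕ) ≤ k := hk
        simp only [Set.mem_iUnion, Set.mem_setOf_eq]
        exact ⟨c (2 * k - 1), hct _ (by omega), c (2 * k), hct _ (by omega), hk', rfl, rfl⟩
      exact (htfin.biUnion fun p hp => htfin.biUnion fun q hq =>
        (h p hp q hq)).subset hsub
    exact Set.Ici_infinite 1 hfin
  obtain ⟨p, hp, q, hq, hinf⟩ := key
  set P : ℕ → Prop := fun k => 1 ≤ k ∧ c (2 * k - 1) = p ∧ c (2 * k) = q with hP
  refine ⟨p, q, Nat.nth P, Nat.nth_strictMono hinf, fun j => (Nat.nth_mem_of_infinite hinf j).1,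
    fun j => ?_⟩
  obtain ⟨hk1, hkp, hkq⟩ := Nat.nth_mem_of_infinite hinf j
  set k := Nat.nth P j
  constructor
  · intro x hx
    have hxn : xs (2 * k - 1) ∈ Metric.ball p r := hkp ▸ hcb (2 * k - 1) (by omega)
    have hdist : ‖x - xs (2 * k - 1)‖ ≤ 2 * r := by
      have h1 : dist x p < r := Metric.mem_ball.mp hx
      have h2 : dist (xs (2 * k - 1)) p < r := Metric.mem_ball.mp hxn
      have htri : dist x (xs (2 * k - 1)) ≤ dist x p + dist p (xs (2 * k - 1)) :=
        dist_triangle _ _ _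
      rw [dist_eq_norm, dist_eq_norm, dist_eq_norm] at htri
      rw [dist_eq_norm] at h1
      have h2' : ‖p - xs (2 * k - 1)‖ < r := by
        rw [dist_eq_norm] at h2; rwa [norm_sub_rev] at h2
      linarith
    have habs := hosc (ts (2 * k - 1)) (hts _ (by omega)) (xs (2 * k - 1))
      (hxs _ (by omega)) x hdist
    have hlo := hlow k hk1
    have := abs_le.mp habs
    linarith [this.1, this.2]
  · intro x hx
    have hxn : xs (2 * k) ∈ Metric.ball q r := hkq ▸ hcb (2 * k) (by omega)
    have hdist : ‖x - xs (2 * k)‖ ≤ 2 * r := by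
      have h1 : dist x q < r := Metric.mem_ball.mp hx
      have h2 : dist (xs (2 * k)) q < r := Metric.mem_ball.mp hxn
      have htri : dist x (xs (2 * k)) ≤ dist x q + dist q (xs (2 * k)) :=
        dist_triangle _ _ _
      rw [dist_eq_norm, dist_eq_norm, dist_eq_norm] at htri
      rw [dist_eq_norm] at h1
      have h2' : ‖q - xs (2 * k)‖ < r := by
        rw [dist_eq_norm] at h2; rwa [norm_sub_rev] at h2
      linarith
    have habs := hosc (ts (2 * k)) (hts _ (by omega)) (xs (2 * k))
      (hxs _ (by omega)) x hdist
    have hhi := hhigh k hk1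
    have := abs_le.mp habs
    linarith [this.1, this.2]
end

section
/- Let N ≥ 1, 𝕌 a nonempty compact topological space, q_{ij} : 𝕌 → ℝ continuous with q_{ij}(u) ≥ 0 for i ≠ j and Σ_j q_{ij}(u) = 0 for all i, u, r : {1,…,N} × 𝕌 → ℝ continuous, G(h)_i = min_{u∈𝕌} [ r(i,u) + Σ_j q_{ij}(u) h_j ], and β ∈ ℝ. If h, h′ : [0,∞) → ℝ^N are differentiable and both satisfy the value iteration ODE ḣ(t) = G(h(t)) − β·𝟏, then t ↦ max_i |h_i(t) − h′_i(t)| is nonincreasing on [0,∞); in particular sup_{t≥0} max_i |h_i(t) − h′_i(t)| ≤ max_i |h_i(0) − h′_i(0)|. -/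
open Set Filter Topology

/-- Sup-norm nonexpansiveness of the value iteration ODE
`ḣ(t) = G(h(t)) − β·𝟏`: for two solutions `h`, `h'` on `[0,∞)`, the function
`t ↦ max_i |h_i(t) − h'_i(t)|` is nonincreasing; in particular it is bounded by its
value at `t = 0`. -/
theorem stmt_9 (N : ℕ) (hN : 1 ≤ N) (𝕌 : Type*) [TopologicalSpace 𝕌]
    [CompactSpace 𝕌] [Nonempty 𝕌]
    (q : Fin N → Fin N → 𝕌 → ℝ) (hqc : ∀ i j, Continuous (q i j))
    (hqoff : ∀ i j, i ≠ j → ∀ u, 0 ≤ q i j u)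
    (hqrow : ∀ i u, ∑ j, q i j u = 0)
    (r : Fin N → 𝕌 → ℝ) (hrc : ∀ i, Continuous (r i))
    (G : (Fin N → ℝ) → Fin N → ℝ)
    (hG : ∀ v i, G v i = sInf (Set.range fun u => r i u + ∑ j, q i j u * v j))
    (β : ℝ) (h h' : ℝ → Fin N → ℝ)
    (hode : ∀ t ∈ Set.Ici (0 : ℝ),
      HasDerivWithinAt h (fun i => G (h t) i - β) (Set.Ici (0 : ℝ)) t)
    (hode' : ∀ t ∈ Set.Ici (0 : ℝ),
      HasDerivWithinAt h' (fun i => G (h' t) i - β) (Set.Ici (0 : ℝ)) t) :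
    AntitoneOn (fun t => ⨆ i, |h t i - h' t i|) (Set.Ici (0 : ℝ)) ∧
    ∀ t ≥ (0 : ℝ), ∀ i, |h t i - h' t i| ≤ ⨆ j, |h 0 j - h' 0 j| := by
  have hN' : Nonempty (Fin N) := Fin.pos_iff_nonempty.mp hN
  set e : ℝ → Fin N → ℝ := fun t i => h t i - h' t i with he
  set φ : ℝ → ℝ := fun t => ⨆ i, |e t i| with hφdef
  have bdd : ∀ t, BddAbove (Set.range fun i => |e t i|) :=
    fun t => Set.Finite.bddAbove (Set.finite_range _)
  -- dissipativity of G
  have keyG : ∀ (v w : Fin N → ℝ) (j : Fin N),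
      (∀ k, v k - w k ≤ v j - w j) → G v j ≤ G w j := by
    intro v w j hvw
    have contF : ∀ (x : Fin N → ℝ),
        Continuous fun u => r j u + ∑ k, q j k u * x k := fun x =>
      (hrc j).add (continuous_finset_sum _ fun k _ => (hqc j k).mul continuous_const)
    obtain ⟨u₀, -, hu₀⟩ := isCompact_univ.exists_isMinOn Set.univ_nonempty
      ((contF w).continuousOn)
    obtain ⟨u₁, -, hu₁⟩ := isCompact_univ.exists_isMinOn Set.univ_nonempty
      ((contF v).continuousOn)
    have hpt : ∀ u : 𝕌, (r j u + ∑ k, q j k u * v k) ≤ r j u + ∑ k, q j k u * w k := by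
      intro u
      have h0 : ∑ k, q j k u * (v k - w k)
          = ∑ k, q j k u * ((v k - w k) - (v j - w j)) := by
        have : ∀ k ∈ Finset.univ, q j k u * ((v k - w k) - (v j - w j))
            = q j k u * (v k - w k) - q j k u * (v j - w j) := fun k _ => by ring
        rw [Finset.sum_congr rfl this, Finset.sum_sub_distrib, ← Finset.sum_mul,
          hqrow j u, zero_mul, sub_zero]
      have h1 : ∑ k, q j k u * (v k - w k) ≤ 0 := by
        rw [h0]
        apply Finset.sum_nonpos
        intro k _
        rcases eq_or_ne k j with rfl | hk
        · simp
        · exact mul_nonpos_of_nonneg_of_nonpos (hqoff j k hk.symm u)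
            (sub_nonpos.2 (hvw k))
      have h2 : ∑ k, q j k u * v k = ∑ k, q j k u * w k + ∑ k, q j k u * (v k - w k) := by
        rw [← Finset.sum_add_distrib]
        exact Finset.sum_congr rfl fun k _ => by ring
      linarith
    rw [hG, hG]
    calc sInf (Set.range fun u => r j u + ∑ k, q j k u * v k)
        ≤ r j u₀ + ∑ k, q j k u₀ * v k :=
          csInf_le ⟨_, by rintro b ⟨u, rfl⟩; exact hu₁ (Set.mem_univ u)⟩
            (Set.mem_range_self u₀)
      _ ≤ r j u₀ + ∑ k, q j k u₀ * w k := hpt u₀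
      _ ≤ sInf (Set.range fun u => r j u + ∑ k, q j k u * w k) :=
          le_csInf (Set.range_nonempty _)
            (by rintro b ⟨u, rfl⟩; exact hu₀ (Set.mem_univ u))
  -- componentwise derivative of e
  have hDe : ∀ t ∈ Set.Ici (0 : ℝ), ∀ j, HasDerivWithinAt (fun s => e s j)
      (G (h t) j - G (h' t) j) (Set.Ici (0 : ℝ)) t := by
    intro t ht j
    have h1 := (hasDerivWithinAt_pi.mp (hode t ht)) j
    have h2 := (hasDerivWithinAt_pi.mp (hode' t ht)) j
    have h3 := h1.sub h2
    simp only [sub_sub_sub_cancel_right] at h3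
    exact h3
  have hce : ∀ j, ContinuousOn (fun t => e t j) (Set.Ici (0 : ℝ)) :=
    fun j t ht => (hDe t ht j).continuousWithinAt
  -- continuity of φ
  have hcφ : ContinuousOn φ (Set.Ici (0 : ℝ)) := by
    have hsup' : ∀ t : ℝ, φ t = Finset.univ.sup' Finset.univ_nonempty fun i => |e t i| := by
      intro t
      apply le_antisymm
      · exact ciSup_le fun i => Finset.le_sup' (fun i => |e t i|) (Finset.mem_univ i)
      · exact Finset.sup'_le _ _ fun i _ => le_ciSup (bdd t) i
    have : ContinuousOn (fun t => Finset.univ.sup' Finset.univ_nonempty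
        fun i : Fin N => |e t i|) (Set.Ici (0 : ℝ)) :=
      ContinuousOn.finset_sup'_apply Finset.univ_nonempty fun i _ => (hce i).abs
    exact ContinuousOn.congr this fun t _ => hsup' t
  -- the per-index eventual estimate
  have main : ∀ τ ∈ Set.Ici (0 : ℝ), ∀ r' : ℝ, 0 < r' → ∀ j,
      ∀ᶠ z in 𝓝[>] τ, |e z j| ≤ φ τ + r' * (z - τ) := by
    intro τ hτ r' hr' j
    have hmem : ∀ᶠ z in 𝓝[>] τ, τ < z := self_mem_nhdsWithin
    have hsub1 : 𝓝[>] τ ≤ 𝓝[Set.Ici (0:ℝ)] τ :=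
      nhdsWithin_mono τ fun z hz => Set.mem_Ici.2 (le_trans (Set.mem_Ici.1 hτ) (le_of_lt (Set.mem_Ioi.1 hz)))
    have hsub2 : 𝓝[>] τ ≤ 𝓝[Set.Ici (0:ℝ) \ {τ}] τ :=
      nhdsWithin_mono τ fun z hz => ⟨Set.mem_Ici.2 (le_trans (Set.mem_Ici.1 hτ) (le_of_lt (Set.mem_Ioi.1 hz))), ne_of_gt hz⟩
    have habs_le : |e τ j| ≤ φ τ := le_ciSup (bdd τ) j
    have hcont : Filter.Tendsto (fun z => e z j) (𝓝[>] τ) (𝓝 (e τ j)) :=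
      ((hce j τ hτ).tendsto).mono_left hsub1
    rcases lt_or_eq_of_le habs_le with hlt | hEq
    · -- strictly below the max: continuity suffices
      have habs : Filter.Tendsto (fun z => |e z j|) (𝓝[>] τ) (𝓝 |e τ j|) :=
        hcont.abs
      filter_upwards [hmem, habs.eventually (eventually_lt_nhds hlt)] with z hz hz2
      nlinarith
    · -- at the max
      have hslope : Filter.Tendsto (slope (fun t => e t j) τ) (𝓝[>] τ)
          (𝓝 (G (h τ) j - G (h' τ) j)) :=
        (hasDerivWithinAt_iff_tendsto_slope.mp (hDe τ hτ j)).mono_left hsub2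
      have hslope_eq : ∀ z, τ < z → slope (fun t => e t j) τ z
          = (e z j - e τ j) / (z - τ) := fun z _ => slope_def_field _ _ _
      rcases lt_trichotomy (e τ j) 0 with hneg | hzero | hpos
      · -- e τ j < 0 : max of h' - h at j
        have hEq' : -e τ j = φ τ := by rw [← hEq, abs_of_neg hneg]
        have hd : 0 ≤ G (h τ) j - G (h' τ) j := by
          have hkey := keyG (h' τ) (h τ) j (fun k => by
            have h1 : |e τ k| ≤ φ τ := le_ciSup (bdd τ) k
            have h2 : -e τ k ≤ φ τ := (neg_le_abs _).trans h1
            simp only [he] at h2 hEq' ⊢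
            linarith)
          linarith
        have h1 : ∀ᶠ z in 𝓝[>] τ, -r' < slope (fun t => e t j) τ z :=
          hslope.eventually (eventually_gt_nhds (by linarith))
        have h2 : ∀ᶠ z in 𝓝[>] τ, e z j < 0 :=
          hcont.eventually (eventually_lt_nhds hneg)
        filter_upwards [hmem, h1, h2] with z hz h1z h2z
        have hzτ : (0:ℝ) < z - τ := by linarith
        rw [hslope_eq z hz, lt_div_iff₀ hzτ] at h1z
        rw [abs_of_neg h2z]
        nlinarith
      · -- e τ j = 0 : then φ τ = 0 and h τ = h' τ, derivative is 0
        have hφ0 : φ τ = 0 := by rw [← hEq, hzero, abs_zero]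
        have hall0 : h τ = h' τ := by
          funext k
          have h1 : |e τ k| ≤ φ τ := le_ciSup (bdd τ) k
          rw [hφ0] at h1
          have := abs_nonneg (e τ k)
          have h2 : e τ k = 0 := abs_eq_zero.mp (le_antisymm h1 this)
          simpa [he, sub_eq_zero] using h2
        have hd0 : G (h τ) j - G (h' τ) j = 0 := by rw [hall0, sub_self]
        rw [hd0] at hslope
        have h1 : ∀ᶠ z in 𝓝[>] τ, slope (fun t => e t j) τ z < r' :=
          hslope.eventually (eventually_lt_nhds hr')
        have h2 : ∀ᶠ z in 𝓝[>] τ, -r' < slope (fun t => e t j) τ z :=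
          hslope.eventually (eventually_gt_nhds (by linarith))
        filter_upwards [hmem, h1, h2] with z hz h1z h2z
        have hzτ : (0:ℝ) < z - τ := by linarith
        rw [hslope_eq z hz, div_lt_iff₀ hzτ] at h1z
        rw [hslope_eq z hz, lt_div_iff₀ hzτ] at h2z
        have : |e z j - e τ j| ≤ r' * (z - τ) := abs_le.2 ⟨by nlinarith, le_of_lt h1z⟩
        calc |e z j| = |e z j - e τ j| := by rw [hzero, sub_zero]
          _ ≤ r' * (z - τ) := this
          _ ≤ φ τ + r' * (z - τ) := by rw [hφ0]; simp
      · -- e τ j > 0 : max of h - h' at j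
        have hEq' : e τ j = φ τ := by rw [← hEq, abs_of_pos hpos]
        have hd : G (h τ) j - G (h' τ) j ≤ 0 := by
          have hkey := keyG (h τ) (h' τ) j (fun k => by
            have h1 : |e τ k| ≤ φ τ := le_ciSup (bdd τ) k
            have h2 : e τ k ≤ φ τ := (le_abs_self _).trans h1
            simp only [he] at h2 hEq' ⊢
            linarith)
          linarith
        have h1 : ∀ᶠ z in 𝓝[>] τ, slope (fun t => e t j) τ z < r' :=
          hslope.eventually (eventually_lt_nhds (by linarith))
        have h2 : ∀ᶠ z in 𝓝[>] τ, 0 < e z j :=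
          hcont.eventually (eventually_gt_nhds hpos)
        filter_upwards [hmem, h1, h2] with z hz h1z h2z
        have hzτ : (0:ℝ) < z - τ := by linarith
        rw [hslope_eq z hz, div_lt_iff₀ hzτ] at h1z
        rw [abs_of_pos h2z]
        nlinarith
  -- Gronwall: φ is nonincreasing
  have mono : ∀ s ∈ Set.Ici (0:ℝ), ∀ t, s ≤ t → φ t ≤ φ s := by
    intro s hs t hst
    have hIcc : Set.Icc s t ⊆ Set.Ici (0:ℝ) := fun z hz => le_trans hs hz.1
    have hgron := le_gronwallBound_of_liminf_deriv_right_le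
      (f := φ) (f' := fun _ => (0:ℝ)) (δ := φ s) (K := 0) (ε := 0) (a := s) (b := t)
      (hcφ.mono hIcc)
      (fun x hx rr hrr => by
        have hrr' : (0:ℝ) < rr := hrr
        have hx0 : x ∈ Set.Ici (0:ℝ) := le_trans hs hx.1
        have hall : ∀ᶠ z in 𝓝[>] x, ∀ j, |e z j| ≤ φ x + (rr/2) * (z - x) :=
          eventually_all.mpr fun j => main x hx0 (rr/2) (by linarith [hrr']) j
        have hmem : ∀ᶠ z in 𝓝[>] x, x < z := self_mem_nhdsWithin
        apply Filter.Eventually.frequently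
        filter_upwards [hall, hmem] with z hz hzx
        have hφz : φ z ≤ φ x + (rr/2) * (z - x) := ciSup_le fun j => hz j
        have hzx' : (0:ℝ) < z - x := by linarith
        rw [inv_mul_lt_iff₀ hzx']
        nlinarith [hrr', hφz, hzx'])
      le_rfl
      (fun x _ => by simp)
      t (Set.right_mem_Icc.2 hst)
    simpa [gronwallBound_K0] using hgron
  constructor
  · intro a ha b hb hab
    exact mono a ha b hab
  · intro t ht i
    calc |h t i - h' t i| ≤ φ t := le_ciSup (bdd t) i
      _ ≤ φ 0 := mono 0 Set.self_mem_Ici t ht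
end

section
/- Let N ≥ 1, 𝕌 a nonempty compact topological space, q_{ij} : 𝕌 → ℝ continuous with q_{ij}(u) ≥ 0 for i ≠ j and Σ_j q_{ij}(u) = 0 for all i, u, r : {1,…,N} × 𝕌 → ℝ continuous, G(h)_i = min_{u∈𝕌} [ r(i,u) + Σ_j q_{ij}(u) h_j ], and β ∈ ℝ. If h, h′ : [0,∞) → ℝ^N are differentiable solutions of ḣ(t) = G(h(t)) − β·𝟏 with h_i(0) ≤ h′_i(0) for every i, then h_i(t) ≤ h′_i(t) for every i and every t ≥ 0. -/
/-- Monotonicity of the value iteration flow `ḣ(t) = G(h(t)) − β·𝟏` with respect to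
the componentwise order: if `h(0) ≤ h'(0)` componentwise, then `h(t) ≤ h'(t)`
componentwise for all `t ≥ 0`. -/
theorem stmt_10 (N : ℕ) (hN : 1 ≤ N) (𝕌 : Type*) [TopologicalSpace 𝕌]
    [CompactSpace 𝕌] [Nonempty 𝕌]
    (q : Fin N → Fin N → 𝕌 → ℝ) (hqc : ∀ i j, Continuous (q i j))
    (hqoff : ∀ i j, i ≠ j → ∀ u, 0 ≤ q i j u)
    (hqrow : ∀ i u, ∑ j, q i j u = 0)
    (r : Fin N → 𝕌 → ℝ) (hrc : ∀ i, Continuous (r i))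
    (G : (Fin N → ℝ) → Fin N → ℝ)
    (hG : ∀ v i, G v i = sInf (Set.range fun u => r i u + ∑ j, q i j u * v j))
    (β : ℝ) (h h' : ℝ → Fin N → ℝ)
    (hode : ∀ t ∈ Set.Ici (0 : ℝ),
      HasDerivWithinAt h (fun i => G (h t) i - β) (Set.Ici (0 : ℝ)) t)
    (hode' : ∀ t ∈ Set.Ici (0 : ℝ),
      HasDerivWithinAt h' (fun i => G (h' t) i - β) (Set.Ici (0 : ℝ)) t)
    (h0le : ∀ i, h 0 i ≤ h' 0 i) :
    ∀ t ≥ (0 : ℝ), ∀ i, h t i ≤ h' t i := by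
  intro t ht i
  -- continuity of solutions on `[0, ∞)`
  have hconth : ContinuousOn h (Set.Ici (0 : ℝ)) :=
    fun s hs => (hode s hs).continuousWithinAt
  have hconth' : ContinuousOn h' (Set.Ici (0 : ℝ)) :=
    fun s hs => (hode' s hs).continuousWithinAt
  -- main barrier claim
  have key : ∀ ε > (0 : ℝ), ∀ s ∈ Set.Icc (0 : ℝ) t, ∀ j,
      0 < h' s j - h s j + ε * Real.exp s := by
    intro ε hε
    by_contra hcon
    push_neg at hcon
    obtain ⟨s₀, hs₀, j₀, hj₀⟩ := hcon
    set g : ℝ → Fin N → ℝ := fun s j => h' s j - h s j + ε * Real.exp s with hg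
    set A : Set ℝ := {s | s ∈ Set.Icc (0 : ℝ) t ∧ ∃ j, g s j ≤ 0} with hA
    have hAne : A.Nonempty := ⟨s₀, hs₀, j₀, hj₀⟩
    have hAbdd : BddBelow A := ⟨0, fun s hs => hs.1.1⟩
    -- A is closed
    have hgcont : ∀ j, ContinuousOn (fun s => g s j) (Set.Ici (0 : ℝ)) := by
      intro j
      exact ((((continuous_apply j).comp_continuousOn hconth').sub
        ((continuous_apply j).comp_continuousOn hconth)).add
        ((continuous_const.mul Real.continuous_exp).continuousOn))
    have hAclosed : IsClosed A := by
      have : A = ⋃ j : Fin N, (Set.Icc (0 : ℝ) t ∩ (fun s => g s j) ⁻¹' Set.Iic 0) := by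
        ext s
        simp only [hA, Set.mem_setOf_eq, Set.mem_iUnion, Set.mem_inter_iff,
          Set.mem_preimage, Set.mem_Iic]
        constructor
        · rintro ⟨hs, j, hj⟩; exact ⟨j, hs, hj⟩
        · rintro ⟨j, hs, hj⟩; exact ⟨hs, j, hj⟩
      rw [this]
      refine isClosed_iUnion_of_finite fun j => ?_
      refine ContinuousOn.preimage_isClosed_of_isClosed
        ((hgcont j).mono ?_) isClosed_Icc isClosed_Iic
      exact fun s hs => hs.1
    set τ := sInf A with hτ
    have hτA : τ ∈ A := hAclosed.csInf_mem hAne hAbdd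
    have hτ0 : 0 ≤ τ := hτA.1.1
    have hτt : τ ≤ t := hτA.1.2
    -- strict positivity before τ
    have hpos : ∀ s, 0 ≤ s → s < τ → ∀ j, 0 < g s j := by
      intro s hs0 hsτ j
      by_contra hle
      push_neg at hle
      have hsA : s ∈ A := ⟨⟨hs0, hsτ.le.trans hτt⟩, j, hle⟩
      exact absurd (csInf_le hAbdd hsA) (not_le.mpr hsτ)
    -- τ > 0
    have hτpos : 0 < τ := by
      rcases lt_or_eq_of_le hτ0 with h0 | h0
      · exact h0
      · exfalso
        obtain ⟨j, hj⟩ := hτA.2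
        rw [← h0] at hj
        have : 0 < g 0 j := by
          simp only [hg, Real.exp_zero, mul_one]
          linarith [h0le j]
        linarith
    -- nonnegativity at τ (limit from the left)
    have hIci : Set.Ici (0 : ℝ) ∈ nhds τ := Ici_mem_nhds hτpos
    have hge : ∀ j, 0 ≤ g τ j := by
      intro j
      have hca : ContinuousAt (fun s => g s j) τ :=
        ((hgcont j) τ (le_of_lt hτpos)).continuousAt hIci
      have htend : Filter.Tendsto (fun s => g s j) (nhdsWithin τ (Set.Iio τ)) (nhds (g τ j)) :=
        hca.continuousWithinAt.tendsto
      refine ge_of_tendsto htend ?_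
      filter_upwards [Ioo_mem_nhdsLT_of_mem (Set.mem_Ioc.mpr ⟨hτpos, le_refl τ⟩)] with s hs
      exact (hpos s hs.1.le hs.2 j).le
    -- equality at some component k
    obtain ⟨k, hk⟩ := hτA.2
    have hkeq : g τ k = 0 := le_antisymm hk (hge k)
    -- quasimonotonicity: G (h τ) k ≤ G (h' τ) k
    set c := ε * Real.exp τ with hc
    have h1 : ∀ j, h τ j ≤ h' τ j + c := by
      intro j; have := hge j; simp only [hg] at this; linarith
    have h2 : h τ k = h' τ k + c := by
      simp only [hg] at hkeq; linarith
    have hGle : G (h τ) k ≤ G (h' τ) k := by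
      rw [hG, hG]
      have hfc : Continuous fun u => r k u + ∑ j, q k j u * h τ j :=
        (hrc k).add (continuous_finset_sum _ fun j _ => (hqc k j).mul continuous_const)
      have hbdd : BddBelow (Set.range fun u => r k u + ∑ j, q k j u * h τ j) :=
        (isCompact_range hfc).bddBelow
      refine le_csInf (Set.range_nonempty _) ?_
      rintro b ⟨u, rfl⟩
      have hsum : ∑ j, q k j u * h τ j ≤ ∑ j, q k j u * h' τ j := by
        have step : ∑ j, q k j u * h τ j ≤ ∑ j, q k j u * (h' τ j + c) := by
          refine Finset.sum_le_sum fun j _ => ?_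
          rcases eq_or_ne j k with rfl | hne
          · rw [← h2]
          · exact mul_le_mul_of_nonneg_left (h1 j) (hqoff k j (Ne.symm hne) u)
        have expand : ∑ j, q k j u * (h' τ j + c)
            = ∑ j, q k j u * h' τ j + (∑ j, q k j u) * c := by
          rw [Finset.sum_mul]
          rw [← Finset.sum_add_distrib]
          congr 1; ext j; ring
        rw [expand, hqrow k u, zero_mul, add_zero] at step
        exact step
      calc sInf (Set.range fun u => r k u + ∑ j, q k j u * h τ j)
          ≤ r k u + ∑ j, q k j u * h τ j := csInf_le hbdd (Set.mem_range_self u)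
        _ ≤ r k u + ∑ j, q k j u * h' τ j := by linarith
    -- derivative of g · k at τ
    have hDh : HasDerivAt h (fun i => G (h τ) i - β) τ :=
      (hode τ (le_of_lt hτpos)).hasDerivAt hIci
    have hDh' : HasDerivAt h' (fun i => G (h' τ) i - β) τ :=
      (hode' τ (le_of_lt hτpos)).hasDerivAt hIci
    have hDhk : HasDerivAt (fun s => h s k) (G (h τ) k - β) τ := hasDerivAt_pi.mp hDh k
    have hDh'k : HasDerivAt (fun s => h' s k) (G (h' τ) k - β) τ := hasDerivAt_pi.mp hDh' k
    set d := (G (h' τ) k - β) - (G (h τ) k - β) + ε * Real.exp τ with hd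
    have hDg : HasDerivAt (fun s => g s k) d τ := by
      have hexp : HasDerivAt (fun s => ε * Real.exp s) (ε * Real.exp τ) τ :=
        (Real.hasDerivAt_exp τ).const_mul ε
      exact (hDh'k.sub hDhk).add hexp
    have hdpos : 0 < d := by
      have : 0 < ε * Real.exp τ := mul_pos hε (Real.exp_pos τ)
      simp only [hd]; linarith
    -- contradiction via the slope
    have hslope : Filter.Tendsto (slope (fun s => g s k) τ)
        (nhdsWithin τ {τ}ᶜ) (nhds d) := hasDerivAt_iff_tendsto_slope.mp hDg
    have hslope' : Filter.Tendsto (slope (fun s => g s k) τ)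
        (nhdsWithin τ (Set.Iio τ)) (nhds d) :=
      hslope.mono_left (nhdsWithin_mono τ fun s hs => ne_of_lt hs)
    have hev : ∀ᶠ s in nhdsWithin τ (Set.Iio τ), 0 < slope (fun s => g s k) τ s :=
      hslope'.eventually (eventually_gt_nhds hdpos)
    have hev2 : ∀ᶠ s in nhdsWithin τ (Set.Iio τ), s ∈ Set.Ioo 0 τ :=
      Ioo_mem_nhdsLT_of_mem (Set.mem_Ioc.mpr ⟨hτpos, le_refl τ⟩)
    obtain ⟨s, hs1, hs2⟩ := (hev.and hev2).exists
    have hslope_val : slope (fun s => g s k) τ s = g s k / (s - τ) := by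
      rw [slope_def_field]; rw [hkeq]; ring
    rw [hslope_val] at hs1
    have hgs : 0 < g s k := hpos s hs2.1.le hs2.2 k
    have hneg : g s k / (s - τ) < 0 :=
      div_neg_of_pos_of_neg hgs (by linarith [hs2.2])
    linarith
  -- conclude by letting ε → 0
  refine le_of_forall_pos_le_add fun ε' hε' => ?_
  have hexppos : 0 < Real.exp t := Real.exp_pos t
  have hεpos : 0 < ε' / Real.exp t := div_pos hε' hexppos
  have := key (ε' / Real.exp t) hεpos t (Set.mem_Icc.mpr ⟨ht, le_refl t⟩) i
  have heq : ε' / Real.exp t * Real.exp t = ε' := div_mul_cancel₀ ε' (ne_of_gt hexppos)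
  rw [heq] at this
  linarith
end

section
/- Let N ≥ 1, 𝕌 a nonempty compact topological space, q_{ij} : 𝕌 → ℝ continuous with q_{ij}(u) ≥ 0 for i ≠ j and Σ_j q_{ij}(u) = 0 for all i, u, r : {1,…,N} × 𝕌 → ℝ continuous, G(h)_i = min_{u∈𝕌} [ r(i,u) + Σ_j q_{ij}(u) h_j ], and β ∈ ℝ. Assume uniform irreducibility: there exist δ > 0 and a matrix Q̄ = [q̄_{ij}] with q̄_{ij} ≥ 0 for i ≠ j, such that q_{ij}(u) ≥ δ·q̄_{ij} for all i ≠ j and u ∈ 𝕌, and such that for every nonempty proper subset S ⊊ {1,…,N} there exist i ∈ S and j ∉ S with q̄_{ij} > 0. If h, h′ : [0,∞) → ℝ^N are differentiable solutions of ḣ(t) = G(h(t)) − β·𝟏 with h_i(0) ≤ h′_i(0) for every i and h(0) ≠ h′(0), then h_i(t) < h′_i(t) for every i and every t > 0. -/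
open Set Filter Topology

lemma barrier_aux {N : ℕ} (f d : ℝ → Fin N → ℝ)
    (hd : ∀ t ∈ Set.Ici (0:ℝ), ∀ i,
      HasDerivWithinAt (fun s => f s i) (d t i) (Set.Ici 0) t)
    (h0 : ∀ i, 0 < f 0 i)
    (key : ∀ t, 0 < t → ∀ i, f t i = 0 → (∀ j, 0 ≤ f t j) → 0 < d t i) :
    ∀ t ∈ Set.Ici (0:ℝ), ∀ i, 0 < f t i := by
  have hcont : ∀ i, ContinuousOn (fun s => f s i) (Set.Ici 0) :=
    fun i t ht => (hd t ht i).continuousWithinAt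
  by_contra hcon
  push_neg at hcon
  obtain ⟨t0, ht0, i0, hi0⟩ := hcon
  set F : Set ℝ := Set.Ici 0 ∩ (⋃ i, (fun s => f s i) ⁻¹' Set.Iic 0) with hF
  have hFcl : IsClosed F := by
    have : F = ⋃ i, (Set.Ici 0 ∩ (fun s => f s i) ⁻¹' Set.Iic 0) := by
      rw [hF, Set.inter_iUnion]
    rw [this]
    exact isClosed_iUnion_of_finite fun i =>
      (hcont i).preimage_isClosed_of_isClosed isClosed_Ici isClosed_Iic
  have hFne : F.Nonempty := ⟨t0, ht0, Set.mem_iUnion.2 ⟨i0, hi0⟩⟩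
  have hFbdd : BddBelow F := ⟨0, fun x hx => hx.1⟩
  set ts := sInf F with hts
  have htsF : ts ∈ F := hFcl.csInf_mem hFne hFbdd
  have hts0 : 0 ≤ ts := htsF.1
  have htspos : 0 < ts := by
    rcases htsF with ⟨-, hmem⟩
    obtain ⟨i, hi⟩ := Set.mem_iUnion.1 hmem
    rcases lt_or_eq_of_le hts0 with h | h
    · exact h
    · exact absurd (h ▸ hi : f 0 i ≤ 0) (not_le.2 (h0 i))
  have hbefore : ∀ s, 0 ≤ s → s < ts → ∀ j, 0 < f s j := by
    intro s hs hslt j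
    by_contra hsj
    push_neg at hsj
    have : s ∈ F := ⟨hs, Set.mem_iUnion.2 ⟨j, hsj⟩⟩
    exact absurd (csInf_le hFbdd this) (not_le.2 hslt)
  have hnn : ∀ j, 0 ≤ f ts j := by
    intro j
    have hne : (𝓝[Set.Ico 0 ts] ts).NeBot := by
      rw [← mem_closure_iff_nhdsWithin_neBot, closure_Ico htspos.ne]
      exact ⟨hts0, le_refl ts⟩
    have htend : Tendsto (fun s => f s j) (𝓝[Set.Ico 0 ts] ts) (𝓝 (f ts j)) :=
      ((hcont j ts (Set.mem_Ici.2 hts0)).mono (fun x hx => hx.1)).tendsto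
    refine ge_of_tendsto htend ?_
    filter_upwards [self_mem_nhdsWithin] with s hs
    exact (hbefore s hs.1 hs.2 j).le
  obtain ⟨i, hi⟩ := Set.mem_iUnion.1 htsF.2
  have hzero : f ts i = 0 := le_antisymm hi (hnn i)
  have hdpos : 0 < d ts i := key ts htspos i hzero hnn
  have hDA : HasDerivAt (fun s => f s i) (d ts i) ts :=
    (hd ts (Set.mem_Ici.2 hts0) i).hasDerivAt (Ici_mem_nhds htspos)
  have hslope := hasDerivAt_iff_tendsto_slope.1 hDA
  have hev : ∀ᶠ s in 𝓝[<] ts, 0 < slope (fun s => f s i) ts s := by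
    have hle : 𝓝[Set.Iio ts] ts ≤ 𝓝[≠] ts :=
      nhdsWithin_mono ts fun x hx => ne_of_lt hx
    exact (hslope.mono_left hle).eventually (eventually_gt_nhds hdpos)
  have hev2 : ∀ᶠ s in 𝓝[<] ts, s ∈ Set.Ioo 0 ts := by
    have : Set.Ioi (0:ℝ) ∈ 𝓝 ts := Ioi_mem_nhds htspos
    filter_upwards [nhdsWithin_le_nhds this, self_mem_nhdsWithin] with s h1 h2
    exact ⟨h1, h2⟩
  obtain ⟨s, hs1, hs2⟩ := ((hev.and hev2).exists)
  have hlt : f s i < f ts i := by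
    have hneg : s - ts < 0 := sub_neg.2 hs2.2
    have hpos := hs1
    rw [slope_def_field] at hpos
    rcases div_pos_iff.1 hpos with ⟨h1, h2⟩ | ⟨h1, h2⟩
    · exact absurd h2 (not_lt.2 hneg.le)
    · linarith
  rw [hzero] at hlt
  exact absurd (hbefore s hs2.1.le hs2.2 i) (not_lt.2 hlt.le)


lemma mono_aux {g d : ℝ → ℝ} {s : ℝ}
    (hd : ∀ t ∈ Set.Ici s, HasDerivWithinAt g (d t) (Set.Ici s) t)
    (hnn : ∀ t ∈ Set.Ioi s, 0 ≤ d t) : MonotoneOn g (Set.Ici s) := by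
  refine monotoneOn_of_hasDerivWithinAt_nonneg (f' := d) (convex_Ici s)
    (fun t ht => (hd t ht).continuousWithinAt)
    (fun t ht => ((hd t (interior_subset ht)).mono interior_subset))
    (fun t ht => hnn t (by rwa [interior_Ici] at ht))

lemma strict_aux {g d : ℝ → ℝ} {s : ℝ}
    (hd : ∀ t ∈ Set.Ici s, HasDerivWithinAt g (d t) (Set.Ici s) t)
    (hpos : ∀ t ∈ Set.Ioi s, 0 < d t) : StrictMonoOn g (Set.Ici s) := by
  refine strictMonoOn_of_hasDerivWithinAt_pos (f' := d) (convex_Ici s)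
    (fun t ht => (hd t ht).continuousWithinAt)
    (fun t ht => ((hd t (interior_subset ht)).mono interior_subset))
    (fun t ht => hpos t (by rwa [interior_Ici] at ht))



/-- Strong monotonicity of the value iteration flow `ḣ(t) = G(h(t)) − β·𝟏` under
uniform irreducibility: if `h(0) ≤ h'(0)` componentwise and `h(0) ≠ h'(0)`, then
`h_i(t) < h'_i(t)` for every `i` and every `t > 0`. -/
theorem stmt_11 (N : ℕ) (hN : 1 ≤ N) (𝕌 : Type*) [TopologicalSpace 𝕌]
    [CompactSpace 𝕌] [Nonempty 𝕌]
    (q : Fin N → Fin N → 𝕌 → ℝ) (hqc : ∀ i j, Continuous (q i j))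
    (hqoff : ∀ i j, i ≠ j → ∀ u, 0 ≤ q i j u)
    (hqrow : ∀ i u, ∑ j, q i j u = 0)
    (r : Fin N → 𝕌 → ℝ) (hrc : ∀ i, Continuous (r i))
    (G : (Fin N → ℝ) → Fin N → ℝ)
    (hG : ∀ v i, G v i = sInf (Set.range fun u => r i u + ∑ j, q i j u * v j))
    (δ : ℝ) (hδ : 0 < δ) (qbar : Fin N → Fin N → ℝ)
    (hqbar : ∀ i j, i ≠ j → 0 ≤ qbar i j)
    (hminor : ∀ i j, i ≠ j → ∀ u, δ * qbar i j ≤ q i j u)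
    (hirr : ∀ S : Set (Fin N), S.Nonempty → S ≠ Set.univ →
      ∃ i ∈ S, ∃ j ∉ S, 0 < qbar i j)
    (β : ℝ) (h h' : ℝ → Fin N → ℝ)
    (hode : ∀ t ∈ Set.Ici (0 : ℝ),
      HasDerivWithinAt h (fun i => G (h t) i - β) (Set.Ici (0 : ℝ)) t)
    (hode' : ∀ t ∈ Set.Ici (0 : ℝ),
      HasDerivWithinAt h' (fun i => G (h' t) i - β) (Set.Ici (0 : ℝ)) t)
    (h0le : ∀ i, h 0 i ≤ h' 0 i) (h0ne : h 0 ≠ h' 0) :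
    ∀ t > (0 : ℝ), ∀ i, h t i < h' t i := by
  haveI : Nonempty (Fin N) := ⟨⟨0, hN⟩⟩
  set z : ℝ → Fin N → ℝ := fun t i => h' t i - h t i with hzdef
  -- componentwise derivatives of z
  have hzd : ∀ t ∈ Set.Ici (0:ℝ), ∀ i,
      HasDerivWithinAt (fun s => z s i) (G (h' t) i - G (h t) i) (Set.Ici 0) t := by
    intro t ht i
    have e1 : HasDerivWithinAt (fun s => h s i) (G (h t) i - β) (Set.Ici 0) t := by
      exact
        ((ContinuousLinearMap.proj i : (Fin N → ℝ) →L[ℝ] ℝ)).hasFDerivAt.comp_hasDerivWithinAt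
          t (hode t ht)
    have e2 : HasDerivWithinAt (fun s => h' s i) (G (h' t) i - β) (Set.Ici 0) t := by
      exact
        ((ContinuousLinearMap.proj i : (Fin N → ℝ) →L[ℝ] ℝ)).hasFDerivAt.comp_hasDerivWithinAt
          t (hode' t ht)
    have := e2.sub e1
    rw [sub_sub_sub_cancel_right] at this
    exact this
  -- key inequality for differences of G
  have hGd : ∀ (v w : Fin N → ℝ) (i : Fin N) (c : ℝ),
      (∀ u, c ≤ ∑ j, q i j u * (w j - v j)) → G v i + c ≤ G w i := by
    intro v w i c hc
    rw [hG w i]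
    refine le_csInf (Set.range_nonempty _) ?_
    rintro x ⟨u, rfl⟩
    have hcontv : Continuous fun u => r i u + ∑ j, q i j u * v j :=
      (hrc i).add (continuous_finset_sum _ fun j _ => (hqc i j).mul continuous_const)
    have hb : BddBelow (Set.range fun u => r i u + ∑ j, q i j u * v j) :=
      (isCompact_range hcontv).bddBelow
    have h1 : G v i ≤ r i u + ∑ j, q i j u * v j := by
      rw [hG v i]; exact csInf_le hb (Set.mem_range_self u)
    have h2 : ∑ j, q i j u * (w j - v j)
        = (∑ j, q i j u * w j) - ∑ j, q i j u * v j := by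
      simp [mul_sub, Finset.sum_sub_distrib]
    have h3 := hc u
    show G v i + c ≤ r i u + ∑ j, q i j u * w j
    linarith
  -- Step 1: z t ≥ 0 on [0,∞)
  have znn : ∀ t ∈ Set.Ici (0:ℝ), ∀ i, 0 ≤ z t i := by
    have hε : ∀ ε : ℝ, 0 < ε → ∀ t ∈ Set.Ici (0:ℝ), ∀ i, 0 < z t i + ε * Real.exp t := by
      intro ε hε
      refine barrier_aux (fun t i => z t i + ε * Real.exp t)
        (fun t i => (G (h' t) i - G (h t) i) + ε * Real.exp t) ?_ ?_ ?_
      · intro t ht i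
        exact (hzd t ht i).add
          (((Real.hasDerivAt_exp t).const_mul ε).hasDerivWithinAt)
      · intro i
        have h1 := h0le i
        have h2 : 0 ≤ z 0 i := by simp only [hzdef]; linarith
        show 0 < z 0 i + ε * Real.exp 0
        simp only [Real.exp_zero, mul_one]
        linarith
      · intro t ht i hzi hj
        beta_reduce at hzi hj ⊢
        have hzi' : z t i = -(ε * Real.exp t) := by linarith
        have hj' : ∀ k, -(ε * Real.exp t) ≤ z t k := fun k => by linarith [hj k]
        have hge : G (h t) i + 0 ≤ G (h' t) i := by
          refine hGd (h t) (h' t) i 0 ?_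
          intro u
          have hterm : ∀ k, q i k u * (-(ε * Real.exp t)) ≤ q i k u * (h' t k - h t k) := by
            intro k
            rcases eq_or_ne k i with rfl | hki
            · rw [show h' t k - h t k = z t k from rfl, hzi']
            · exact mul_le_mul_of_nonneg_left (hj' k) (hqoff i k (Ne.symm hki) u)
          calc (0:ℝ) = (∑ k, q i k u) * (-(ε * Real.exp t)) := by rw [hqrow i u]; ring
            _ = ∑ k, q i k u * (-(ε * Real.exp t)) := Finset.sum_mul ..
            _ ≤ ∑ k, q i k u * (h' t k - h t k) := Finset.sum_le_sum fun k _ => hterm k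
        have hp : (0:ℝ) < ε * Real.exp t := mul_pos hε (Real.exp_pos t)
        show 0 < (G (h' t) i - G (h t) i) + ε * Real.exp t
        linarith
    intro t ht i
    by_contra hneg
    push_neg at hneg
    have hexp := Real.exp_pos t
    set ε := (-(z t i)) / (2 * Real.exp t) with hεdef
    have hεpos : 0 < ε := div_pos (by linarith) (by linarith)
    have hc := hε ε hεpos t ht i
    beta_reduce at hc
    have heq : ε * Real.exp t = -(z t i) / 2 := by
      rw [hεdef]; field_simp
    rw [heq] at hc
    simp only [hzdef] at hc hneg
    linarith
  -- uniform bound on diagonal rates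
  obtain ⟨M, hM0, hM⟩ : ∃ M : ℝ, 0 ≤ M ∧ ∀ i u, -M ≤ q i i u := by
    have hex : ∀ i : Fin N, ∃ Mi : ℝ, ∀ u, -(q i i u) ≤ Mi := by
      intro i
      obtain ⟨Mi, hMi⟩ := (isCompact_range (hqc i i).neg).bddAbove
      exact ⟨Mi, fun u => hMi (Set.mem_range_self u)⟩
    choose Mi hMi using hex
    refine ⟨max (Finset.univ.sup' Finset.univ_nonempty Mi) 0, le_max_right _ _, fun i u => ?_⟩
    have h1 := hMi i u
    have h2 : Mi i ≤ Finset.univ.sup' Finset.univ_nonempty Mi :=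
      Finset.le_sup' Mi (Finset.mem_univ i)
    have h3 := le_max_left (Finset.univ.sup' Finset.univ_nonempty Mi) (0:ℝ)
    linarith
  -- the exponentially weighted function is monotone / strictly monotone
  have hgd : ∀ (i : Fin N) (t : ℝ), t ∈ Set.Ici (0:ℝ) →
      HasDerivWithinAt (fun τ => Real.exp (M * τ) * z τ i)
        (M * Real.exp (M * t) * z t i + Real.exp (M * t) * (G (h' t) i - G (h t) i))
        (Set.Ici 0) t := by
    intro i t ht
    have hexp : HasDerivAt (fun τ => Real.exp (M * τ)) (Real.exp (M * t) * M) t := by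
      have := (Real.hasDerivAt_exp (M * t)).comp t ((hasDerivAt_id t).const_mul M)
      simpa [mul_comm, Function.comp_def] using this
    have := (hexp.hasDerivWithinAt).mul (hzd t ht i)
    exact this.congr_deriv (by ring)
  -- lower bound for the drift when z ≥ 0
  have hdrift : ∀ (t : ℝ), t ∈ Set.Ici (0:ℝ) → ∀ i,
      -M * z t i ≤ G (h' t) i - G (h t) i := by
    intro t ht i
    have := hGd (h t) (h' t) i (-M * z t i) ?_
    · linarith
    · intro u
      have hterm : ∀ k, (if k = i then q i i u * z t i else 0) ≤ q i k u * (h' t k - h t k) := by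
        intro k
        rcases eq_or_ne k i with rfl | hki
        · simp [hzdef]
        · simp only [if_neg hki]
          exact mul_nonneg (hqoff i k (Ne.symm hki) u) (znn t ht k)
      have hsum : ∑ k, (if k = i then q i i u * z t i else 0) = q i i u * z t i := by
        simp
      have h1 : -M * z t i ≤ q i i u * z t i :=
        mul_le_mul_of_nonneg_right (hM i u) (znn t ht i)
      calc -M * z t i ≤ q i i u * z t i := h1
        _ = ∑ k, (if k = i then q i i u * z t i else 0) := hsum.symm
        _ ≤ ∑ k, q i k u * (h' t k - h t k) := Finset.sum_le_sum fun k _ => hterm k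
  -- persistence of positivity
  have persist : ∀ (i : Fin N) (s t : ℝ), 0 ≤ s → s ≤ t → 0 < z s i → 0 < z t i := by
    intro i s t hs hst hzs
    have hmono : MonotoneOn (fun τ => Real.exp (M * τ) * z τ i) (Set.Ici s) := by
      refine mono_aux (d := fun t => M * Real.exp (M * t) * z t i
          + Real.exp (M * t) * (G (h' t) i - G (h t) i)) ?_ ?_
      · intro τ hτ
        exact (hgd i τ (le_trans hs hτ)).mono (Set.Ici_subset_Ici.2 hs)
      · intro τ hτ
        have hτ0 : τ ∈ Set.Ici (0:ℝ) := le_trans hs (le_of_lt hτ)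
        have h1 := hdrift τ hτ0 i
        have h2 := Real.exp_pos (M * τ)
        show 0 ≤ M * Real.exp (M * τ) * z τ i + Real.exp (M * τ) * (G (h' τ) i - G (h τ) i)
        nlinarith [znn τ hτ0 i]
    have hle := hmono (Set.self_mem_Ici) (Set.mem_Ici.2 hst) hst
    beta_reduce at hle
    have he1 := Real.exp_pos (M * s)
    have he2 := Real.exp_pos (M * t)
    nlinarith
  -- spreading of positivity via irreducibility
  have spread : ∀ (i j : Fin N), i ≠ j → 0 < qbar i j → ∀ (s t : ℝ), 0 ≤ s →
      0 < z s j → s < t → 0 < z t i := by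
    intro i j hij hq s t hs hzj hst
    have hstrict : StrictMonoOn (fun τ => Real.exp (M * τ) * z τ i) (Set.Ici s) := by
      refine strict_aux (d := fun t => M * Real.exp (M * t) * z t i
          + Real.exp (M * t) * (G (h' t) i - G (h t) i)) ?_ ?_
      · intro τ hτ
        exact (hgd i τ (le_trans hs hτ)).mono (Set.Ici_subset_Ici.2 hs)
      · intro τ hτ
        have hτ0 : τ ∈ Set.Ici (0:ℝ) := le_trans hs (le_of_lt hτ)
        have hzjτ : 0 < z τ j := persist j s τ hs (le_of_lt hτ) hzj
        -- sharper drift bound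
        have hd2 : -M * z τ i + δ * qbar i j * z τ j ≤ G (h' τ) i - G (h τ) i := by
          have := hGd (h τ) (h' τ) i (-M * z τ i + δ * qbar i j * z τ j) ?_
          · linarith
          · intro u
            have hterm : ∀ k, ((if k = i then q i i u * z τ i else 0)
                  + (if k = j then δ * qbar i j * z τ j else 0))
                ≤ q i k u * (h' τ k - h τ k) := by
              intro k
              rcases eq_or_ne k i with rfl | hki
              · simp [hij, hzdef]
              · rcases eq_or_ne k j with rfl | hkj
                · simp only [if_neg hki, if_pos rfl, zero_add]
                  show δ * qbar i k * z τ k ≤ q i k u * z τ k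
                  exact mul_le_mul_of_nonneg_right (hminor i k (Ne.symm hki) u) (znn τ hτ0 k)
                · simp only [if_neg hki, if_neg hkj, add_zero]
                  show (0:ℝ) ≤ q i k u * z τ k
                  exact mul_nonneg (hqoff i k (Ne.symm hki) u) (znn τ hτ0 k)
            have hsum : ∑ k, ((if k = i then q i i u * z τ i else 0)
                  + (if k = j then δ * qbar i j * z τ j else 0))
                = q i i u * z τ i + δ * qbar i j * z τ j := by
              rw [Finset.sum_add_distrib]; simp
            have h1 : -M * z τ i ≤ q i i u * z τ i :=
              mul_le_mul_of_nonneg_right (hM i u) (znn τ hτ0 i)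
            calc -M * z τ i + δ * qbar i j * z τ j
                ≤ q i i u * z τ i + δ * qbar i j * z τ j := by linarith
              _ = ∑ k, ((if k = i then q i i u * z τ i else 0)
                  + (if k = j then δ * qbar i j * z τ j else 0)) := hsum.symm
              _ ≤ ∑ k, q i k u * (h' τ k - h τ k) := Finset.sum_le_sum fun k _ => hterm k
        have he := Real.exp_pos (M * τ)
        have hfpos : 0 < δ * qbar i j * z τ j := by positivity
        show 0 < M * Real.exp (M * τ) * z τ i + Real.exp (M * τ) * (G (h' τ) i - G (h τ) i)
        nlinarith [znn τ hτ0 i]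
    have hlt := hstrict (Set.self_mem_Ici) (Set.mem_Ici.2 hst.le) hst
    beta_reduce at hlt
    have hzs : 0 ≤ z s i := znn s hs i
    have he1 := Real.exp_pos (M * s)
    have he2 := Real.exp_pos (M * t)
    nlinarith
  -- the finset of strictly positive coordinates
  set Sf : ℝ → Finset (Fin N) := fun t => Finset.univ.filter (fun i => 0 < z t i) with hSf
  have hSmono : ∀ s t : ℝ, 0 ≤ s → s ≤ t → Sf s ⊆ Sf t := by
    intro s t hs hst i hi
    rw [hSf, Finset.mem_filter] at hi ⊢
    exact ⟨Finset.mem_univ i, persist i s t hs hst hi.2⟩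
  have hSgrow : ∀ s t : ℝ, 0 ≤ s → s < t → (Sf s).Nonempty → Sf s ≠ Finset.univ →
      Sf s ⊂ Sf t := by
    intro s t hs hst hne hnu
    set A : Set (Fin N) := {i | i ∉ Sf s} with hA
    have hAne : A.Nonempty := by
      by_contra hcon
      rw [Set.not_nonempty_iff_eq_empty] at hcon
      apply hnu
      apply Finset.eq_univ_iff_forall.2
      intro i
      by_contra hmem
      have : i ∈ A := hmem
      rw [hcon] at this
      exact this
    have hAnu : A ≠ Set.univ := by
      obtain ⟨k, hk⟩ := hne
      intro hcon
      have : k ∈ A := hcon ▸ Set.mem_univ k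
      exact this hk
    obtain ⟨i, hiA, j, hjA, hqij⟩ := hirr A hAne hAnu
    have hjS : j ∈ Sf s := not_not.1 hjA
    have hij : i ≠ j := fun hcon => hiA (hcon ▸ hjS)
    have hzj : 0 < z s j := (Finset.mem_filter.1 hjS).2
    have hzt : 0 < z t i := spread i j hij hqij s t hs hzj hst
    refine (Finset.ssubset_iff_of_subset (hSmono s t hs hst.le)).2
      ⟨i, ?_, hiA⟩
    rw [hSf, Finset.mem_filter]
    exact ⟨Finset.mem_univ i, hzt⟩
  have hkey : ∀ m : ℕ, ∀ s t : ℝ, 0 ≤ s → s < t → (Sf s).Nonempty →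
      min N ((Sf s).card + m) ≤ (Sf t).card := by
    intro m
    induction m with
    | zero =>
      intro s t hs hst hne
      calc min N ((Sf s).card + 0) ≤ (Sf s).card := by
              simpa using min_le_right N ((Sf s).card)
        _ ≤ (Sf t).card := Finset.card_le_card (hSmono s t hs hst.le)
    | succ m ih =>
      intro s t hs hst hne
      by_cases hu : Sf s = Finset.univ
      · have hsub : Finset.univ ⊆ Sf t := hu ▸ hSmono s t hs hst.le
        have ht2 : Sf t = Finset.univ := Finset.univ_subset_iff.1 hsub
        rw [ht2, Finset.card_univ, Fintype.card_fin]
        exact min_le_left _ _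
      · set mid := (s + t) / 2 with hmid
        have h1 : s < mid := by rw [hmid]; linarith
        have h2 : mid < t := by rw [hmid]; linarith
        have hss := hSgrow s mid hs h1 hne hu
        have hcard : (Sf s).card + 1 ≤ (Sf mid).card := Finset.card_lt_card hss
        have hmidne : (Sf mid).Nonempty := hne.mono hss.subset
        have := ih mid t (le_trans hs h1.le) h2 hmidne
        have hmin : min N ((Sf s).card + (m+1)) ≤ min N ((Sf mid).card + m) := by omega
        omega
  -- conclusion
  intro t ht i
  have hS0 : (Sf 0).Nonempty := by
    have : ∃ k, h 0 k ≠ h' 0 k := Function.ne_iff.1 h0ne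
    obtain ⟨k, hk⟩ := this
    refine ⟨k, ?_⟩
    rw [hSf, Finset.mem_filter]
    refine ⟨Finset.mem_univ k, ?_⟩
    have h1 := h0le k
    have : 0 ≤ z 0 k := znn 0 Set.self_mem_Ici k
    rcases lt_or_eq_of_le this with hlt | heq
    · exact hlt
    · exfalso
      have h2 : h' 0 k - h 0 k = 0 := heq.symm
      exact hk (by linarith)
  have hcard := hkey N 0 t le_rfl ht hS0
  have hNle : N ≤ (Sf t).card := by
    have : min N ((Sf 0).card + N) = N := min_eq_left (by omega)
    omega
  have huniv : Sf t = Finset.univ := by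
    apply Finset.eq_univ_of_card
    have := Finset.card_le_univ (Sf t)
    simp at this ⊢
    omega
  have : i ∈ Sf t := huniv ▸ Finset.mem_univ i
  have h3 := (Finset.mem_filter.1 this).2
  simpa [hzdef, sub_pos] using h3
end

section
/- Let N ≥ 1, 𝕌 a nonempty compact topological space, q_{ij} : 𝕌 → ℝ continuous with q_{ij}(u) ≥ 0 for i ≠ j and Σ_j q_{ij}(u) = 0 for all i, u, and r : {1,…,N} × 𝕌 → ℝ continuous. Assume uniform irreducibility: there exist δ > 0 and a matrix Q̄ = [q̄_{ij}] with q̄_{ij} ≥ 0 for i ≠ j, such that q_{ij}(u) ≥ δ·q̄_{ij} for all i ≠ j and u ∈ 𝕌, and for every nonempty proper subset S ⊊ {1,…,N} there exist i ∈ S, j ∉ S with q̄_{ij} > 0. Then there exists a unique pair (V*, β) ∈ ℝ^N × ℝ with V*_N = 0 satisfying min_{u∈𝕌} [ Σ_j q_{ij}(u) V*_j + r(i,u) ] = β for every i ∈ {1,…,N}. Moreover, any pair (V, β′) ∈ ℝ^N × ℝ satisfying min_{u∈𝕌} [ Σ_j q_{ij}(u) V_j + r(i,u) ] = β′ for every i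 has β′ = β and V = V* + c·𝟏 for some c ∈ ℝ. -/
section helpers
variable {𝕌 : Type*} [TopologicalSpace 𝕌] [CompactSpace 𝕌] [Nonempty 𝕌]

lemma hjb_exists_min (f : 𝕌 → ℝ) (hf : Continuous f) :
    ∃ u, (∀ v, f u ≤ f v) ∧ sInf (Set.range f) = f u := by
  obtain ⟨u, -, hu⟩ := isCompact_univ.exists_isMinOn Set.univ_nonempty hf.continuousOn
  have hmin : ∀ v, f u ≤ f v := fun v => hu (Set.mem_univ v)
  refine ⟨u, hmin, le_antisymm (csInf_le ⟨f u, ?_⟩ ⟨u, rfl⟩) (le_csInf ⟨f u, u, rfl⟩ ?_)⟩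
  · rintro x ⟨v, rfl⟩; exact hmin v
  · rintro x ⟨v, rfl⟩; exact hmin v

lemma hjb_sInf_le {f : 𝕌 → ℝ} (hf : Continuous f) (u : 𝕌) : sInf (Set.range f) ≤ f u := by
  obtain ⟨w, hw, heq⟩ := hjb_exists_min f hf
  rw [heq]; exact hw u

lemma hjb_sInf_mono {f g : 𝕌 → ℝ} (hf : Continuous f) (hg : Continuous g) (c : ℝ)
    (h : ∀ u, f u ≤ g u + c) : sInf (Set.range f) ≤ sInf (Set.range g) + c := by
  obtain ⟨w, hw, heq⟩ := hjb_exists_min g hg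
  rw [heq]
  exact le_trans (hjb_sInf_le hf w) (h w)

lemma hjb_abs_sInf_sub {f g : 𝕌 → ℝ} (hf : Continuous f) (hg : Continuous g) {c : ℝ}
    (h : ∀ u, |f u - g u| ≤ c) : |sInf (Set.range f) - sInf (Set.range g)| ≤ c := by
  have h1 : sInf (Set.range f) ≤ sInf (Set.range g) + c :=
    hjb_sInf_mono hf hg c fun u => by have := (abs_le.1 (h u)).2; linarith
  have h2 : sInf (Set.range g) ≤ sInf (Set.range f) + c :=
    hjb_sInf_mono hg hf c fun u => by have := (abs_le.1 (h u)).1; linarith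
  rw [abs_le]; constructor <;> linarith

lemma hjb_sInf_add_const {g : 𝕌 → ℝ} (hg : Continuous g) (c : ℝ) :
    sInf (Set.range fun u => g u + c) = sInf (Set.range g) + c := by
  have h1 : sInf (Set.range fun u => g u + c) ≤ sInf (Set.range g) + c :=
    hjb_sInf_mono (hg.add continuous_const) hg c fun u => le_refl _
  have h2 : sInf (Set.range g) ≤ sInf (Set.range fun u => g u + c) + (-c) :=
    hjb_sInf_mono (f := g) (g := fun u => g u + c) hg (hg.add continuous_const) (-c) fun u => by ring_nf; exact le_refl _
  linarith

lemma hjb_le_sum_abs {ι κ : Type*} [Fintype ι] [Fintype κ] (B : ι → κ → ℝ) (i : ι) (j : κ) :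
    |B i j| ≤ ∑ i', ∑ j', |B i' j'| := by
  have h1 : |B i j| ≤ ∑ j', |B i j'| :=
    Finset.single_le_sum (f := fun j' => |B i j'|) (fun _ _ => abs_nonneg _) (Finset.mem_univ j)
  exact h1.trans (Finset.single_le_sum (f := fun i' => ∑ j', |B i' j'|)
    (fun _ _ => Finset.sum_nonneg fun _ _ => abs_nonneg _) (Finset.mem_univ i))

end helpers

/-- Recursively defined span constants for the HJB span bound. -/
private noncomputable def hjbCs (R QM Nr dε : ℝ) : ℕ → ℝ
  | 0 => 0
  | k + 1 => hjbCs R QM Nr dε k + (2 * R + Nr * QM * hjbCs R QM Nr dε k) / dε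

private lemma hjbCs_zero (R QM Nr dε : ℝ) : hjbCs R QM Nr dε 0 = 0 := rfl

private lemma hjbCs_succ (R QM Nr dε : ℝ) (k : ℕ) :
    hjbCs R QM Nr dε (k + 1)
      = hjbCs R QM Nr dε k + (2 * R + Nr * QM * hjbCs R QM Nr dε k) / dε := rfl

set_option maxHeartbeats 1000000 in
/-- Characterization of the solution of the ergodic HJB equation
`min_{u∈𝕌} [ Σ_j q_{ij}(u) V_j + r(i,u) ] = β` for a uniformly irreducible
continuous-time controlled Markov chain: there is a unique pair `(V*, β)` with
`V*_N = 0`, and any solution pair `(V, β′)` has `β′ = β` and `V = V* + c·𝟏`. -/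
theorem stmt_12 (N : ℕ) (hN : 1 ≤ N) (𝕌 : Type*) [TopologicalSpace 𝕌]
    [CompactSpace 𝕌] [Nonempty 𝕌]
    (q : Fin N → Fin N → 𝕌 → ℝ) (hqc : ∀ i j, Continuous (q i j))
    (hqoff : ∀ i j, i ≠ j → ∀ u, 0 ≤ q i j u)
    (hqrow : ∀ i u, ∑ j, q i j u = 0)
    (r : Fin N → 𝕌 → ℝ) (hrc : ∀ i, Continuous (r i))
    (δ : ℝ) (hδ : 0 < δ) (qbar : Fin N → Fin N → ℝ)
    (hqbar : ∀ i j, i ≠ j → 0 ≤ qbar i j)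
    (hminor : ∀ i j, i ≠ j → ∀ u, δ * qbar i j ≤ q i j u)
    (hirr : ∀ S : Set (Fin N), S.Nonempty → S ≠ Set.univ →
      ∃ i ∈ S, ∃ j ∉ S, 0 < qbar i j) :
    ∃ Vstar : Fin N → ℝ, ∃ β : ℝ,
      Vstar ⟨N - 1, by omega⟩ = 0 ∧
      (∀ i, sInf (Set.range fun u => ∑ j, q i j u * Vstar j + r i u) = β) ∧
      ∀ (V : Fin N → ℝ) (β' : ℝ),
        (∀ i, sInf (Set.range fun u => ∑ j, q i j u * V j + r i u) = β') →
        β' = β ∧ ∃ c : ℝ, V = fun i => Vstar i + c := by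
  classical
  haveI hNe : Nonempty (Fin N) := ⟨⟨0, by omega⟩⟩
  -- the Bellman operator
  set T : (Fin N → ℝ) → Fin N → ℝ :=
    fun V i => sInf (Set.range fun u => ∑ j, q i j u * V j + r i u) with hTdef
  have hcont : ∀ (V : Fin N → ℝ) (i : Fin N),
      Continuous (fun u => ∑ j, q i j u * V j + r i u) :=
    fun V i => (continuous_finset_sum _ fun j _ => (hqc i j).mul continuous_const).add (hrc i)
  -- uniform bound on q
  have hqb : ∀ i j : Fin N, ∃ b : ℝ, ∀ u, q i j u ≤ b := by
    intro i j
    obtain ⟨u, -, hu⟩ := isCompact_univ.exists_isMaxOn Set.univ_nonempty (hqc i j).continuousOn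
    exact ⟨q i j u, fun v => hu (Set.mem_univ v)⟩
  choose B hB using hqb
  set QM : ℝ := ∑ i, ∑ j, |B i j| with hQMdef
  have hQM0 : 0 ≤ QM := Finset.sum_nonneg fun _ _ => Finset.sum_nonneg fun _ _ => abs_nonneg _
  have hqle : ∀ i j u, q i j u ≤ QM :=
    fun i j u => (hB i j u).trans ((le_abs_self _).trans (hjb_le_sum_abs B i j))
  have hQMN : QM ≤ (N : ℝ) * QM := le_mul_of_one_le_left hQM0 (by exact_mod_cast hN)
  -- diagonal bounds
  have hdiag : ∀ i u, q i i u = -∑ j ∈ Finset.univ.erase i, q i j u := by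
    intro i u
    have h := hqrow i u
    rw [← Finset.add_sum_erase _ _ (Finset.mem_univ i)] at h
    linarith
  have hdiag0 : ∀ i u, q i i u ≤ 0 := by
    intro i u
    rw [hdiag i u, neg_nonpos]
    exact Finset.sum_nonneg fun j hj => hqoff i j (Ne.symm (Finset.ne_of_mem_erase hj)) u
  have hdiaglb : ∀ i u, -((N : ℝ) * QM) ≤ q i i u := by
    intro i u
    rw [hdiag i u, neg_le_neg_iff]
    calc ∑ j ∈ Finset.univ.erase i, q i j u ≤ ∑ _j ∈ Finset.univ.erase i, QM :=
          Finset.sum_le_sum fun j _ => hqle i j u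
      _ = ((Finset.univ.erase i).card : ℝ) * QM := by rw [Finset.sum_const, nsmul_eq_mul]
      _ ≤ (N : ℝ) * QM := by
          apply mul_le_mul_of_nonneg_right _ hQM0
          have := (Finset.card_erase_le (s := (Finset.univ : Finset (Fin N))) (a := i))
          have h2 : (Finset.univ : Finset (Fin N)).card = N := by simp
          exact_mod_cast this.trans_eq h2
  have habs : ∀ i j u, |q i j u| ≤ (N : ℝ) * QM := by
    intro i j u
    rcases eq_or_ne j i with rfl | hji
    · exact abs_le.2 ⟨hdiaglb j u, (hdiag0 j u).trans (by positivity)⟩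
    · exact abs_le.2 ⟨by nlinarith [hqoff i j (Ne.symm hji) u, hQM0],
        (hqle i j u).trans hQMN⟩
  -- uniform bound on r
  have hrb : ∀ i : Fin N, ∃ b : ℝ, ∀ u, |r i u| ≤ b := by
    intro i
    obtain ⟨u, -, hu⟩ := isCompact_univ.exists_isMaxOn Set.univ_nonempty (hrc i).abs.continuousOn
    exact ⟨|r i u|, fun v => hu (Set.mem_univ v)⟩
  choose Br hBr using hrb
  set R : ℝ := ∑ i, |Br i| with hRdef
  have hrle : ∀ i u, |r i u| ≤ R := fun i u => (hBr i u).trans ((le_abs_self _).trans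
    (Finset.single_le_sum (f := fun i => |Br i|) (fun _ _ => abs_nonneg _) (Finset.mem_univ i)))
  have hR0 : 0 ≤ R := le_trans (abs_nonneg _) (hrle ⟨0, by omega⟩ (Classical.arbitrary 𝕌))
  -- the minorization constant
  obtain ⟨ε, hε0, hεle⟩ : ∃ ε : ℝ, 0 < ε ∧ ∀ i j : Fin N, 0 < qbar i j → ε ≤ qbar i j := by
    by_cases hPne : (Finset.univ.filter (fun p : Fin N × Fin N => 0 < qbar p.1 p.2)).Nonempty
    · refine ⟨(Finset.univ.filter (fun p : Fin N × Fin N => 0 < qbar p.1 p.2)).inf' hPne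
        (fun p => qbar p.1 p.2), ?_, ?_⟩
      · rw [Finset.lt_inf'_iff]
        intro p hp
        exact (Finset.mem_filter.1 hp).2
      · intro i j h
        exact Finset.inf'_le (f := fun p : Fin N × Fin N => qbar p.1 p.2)
          (Finset.mem_filter.2 ⟨Finset.mem_univ ((i, j) : Fin N × Fin N), h⟩)
    · exact ⟨1, one_pos, fun i j h =>
        absurd ⟨((i, j) : Fin N × Fin N),
          Finset.mem_filter.2 ⟨Finset.mem_univ _, h⟩⟩ hPne⟩
  -- row-sum trick
  have hrow : ∀ (V : Fin N → ℝ) (i : Fin N) (u : 𝕌),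
      ∑ j, q i j u * V j = ∑ j, q i j u * (V j - V i) := by
    intro V i u
    have h : ∑ j, q i j u * (V j - V i) = ∑ j, q i j u * V j - (∑ j, q i j u) * V i := by
      rw [Finset.sum_mul, ← Finset.sum_sub_distrib]
      exact Finset.sum_congr rfl fun j _ => by ring
    rw [h, hqrow]; ring
  -- Lipschitz estimate for T
  set L : ℝ := (N : ℝ) * ((N : ℝ) * QM) with hLdef
  have hTlip : ∀ (V W : Fin N → ℝ) (i : Fin N), |T V i - T W i| ≤ L * dist V W := by
    intro V W i
    apply hjb_abs_sInf_sub (hcont V i) (hcont W i)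
    intro u
    have heq : (∑ j, q i j u * V j + r i u) - (∑ j, q i j u * W j + r i u)
        = ∑ j, q i j u * (V j - W j) := by
      have h2 : ∑ j, q i j u * (V j - W j) = ∑ j, q i j u * V j - ∑ j, q i j u * W j := by
        rw [← Finset.sum_sub_distrib]
        exact Finset.sum_congr rfl fun j _ => by ring
      rw [h2]; ring
    rw [heq]
    calc |∑ j, q i j u * (V j - W j)| ≤ ∑ j, |q i j u * (V j - W j)| :=
          Finset.abs_sum_le_sum_abs _ _
      _ ≤ ∑ _j : Fin N, ((N : ℝ) * QM) * dist V W := by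
          apply Finset.sum_le_sum
          intro j _
          rw [abs_mul]
          apply mul_le_mul (habs i j u) _ (abs_nonneg _) (by positivity)
          rw [← Real.dist_eq]
          exact dist_le_pi_dist V W j
      _ = L * dist V W := by
          rw [Finset.sum_const, nsmul_eq_mul, Finset.card_univ, Fintype.card_fin, hLdef]; ring
  -- shift invariance of T
  have hTshift : ∀ (V : Fin N → ℝ) (c : ℝ) (i : Fin N), T (fun j => V j + c) i = T V i := by
    intro V c i
    have h : (fun u => ∑ j, q i j u * (V j + c) + r i u)
        = fun u => ∑ j, q i j u * V j + r i u := by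
      funext u
      have h2 : ∑ j, q i j u * (V j + c) = ∑ j, q i j u * V j + (∑ j, q i j u) * c := by
        rw [Finset.sum_mul, ← Finset.sum_add_distrib]
        exact Finset.sum_congr rfl fun j _ => by ring
      rw [h2, hqrow]; ring
    simp only [hTdef]
    rw [h]
  -- constant M and the discounted fixed points
  set M : ℝ := (N : ℝ) * QM + 1 with hMdef
  have hM0 : 0 < M := by
    have : (0:ℝ) ≤ (N : ℝ) * QM := by positivity
    rw [hMdef]; linarith
  have existsfix : ∀ α : ℝ, 0 < α → ∃ V : Fin N → ℝ, ∀ i, α * V i = T V i := by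
    intro α hα
    have hαM : 0 < α + M := by linarith
    set F : (Fin N → ℝ) → Fin N → ℝ := fun V i =>
      (α + M)⁻¹ * sInf (Set.range fun u => (∑ j, q i j u * V j + r i u) + M * V i) with hFdef
    have hFval : ∀ (V : Fin N → ℝ) (i : Fin N), F V i = (α + M)⁻¹ * (T V i + M * V i) := by
      intro V i
      rw [hFdef]
      simp only [hTdef]
      rw [hjb_sInf_add_const (hcont V i) (M * V i)]
    -- the contraction estimate
    have hstep : ∀ (V W : Fin N → ℝ) (i : Fin N),
        |sInf (Set.range fun u => (∑ j, q i j u * V j + r i u) + M * V i)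
          - sInf (Set.range fun u => (∑ j, q i j u * W j + r i u) + M * W i)|
          ≤ M * dist V W := by
      intro V W i
      apply hjb_abs_sInf_sub ((hcont V i).add continuous_const)
        ((hcont W i).add continuous_const)
      intro u
      set a : Fin N → ℝ := fun j => q i j u + if j = i then M else 0 with hadef
      have ha0 : ∀ j, 0 ≤ a j := by
        intro j
        simp only [hadef]
        rcases eq_or_ne j i with rfl | hji
        · rw [if_pos rfl, hMdef]
          have h1 := hdiaglb j u
          linarith
        · simp only [if_neg hji]
          have := hqoff i j (Ne.symm hji) u
          linarith
      have hasum : ∑ j, a j = M := by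
        simp only [hadef]
        rw [Finset.sum_add_distrib, hqrow, Finset.sum_ite_eq' Finset.univ i (fun _ => M)]
        simp
      have hdiff : ((∑ j, q i j u * V j + r i u) + M * V i)
          - ((∑ j, q i j u * W j + r i u) + M * W i) = ∑ j, a j * (V j - W j) := by
        have h1 : ∑ j, a j * (V j - W j)
            = ∑ j, (q i j u * V j - q i j u * W j)
              + ∑ j, ((if j = i then M else 0) * (V j - W j)) := by
          rw [← Finset.sum_add_distrib]
          apply Finset.sum_congr rfl
          intro j _
          simp only [hadef]; ring
        have h2 : ∑ j, ((if j = i then M else 0) * (V j - W j)) = M * (V i - W i) := by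
          simp [ite_mul, Finset.sum_ite_eq']
        rw [h1, h2, Finset.sum_sub_distrib]
        ring
      simp only [Pi.add_apply]
      rw [hdiff]
      calc |∑ j, a j * (V j - W j)| ≤ ∑ j, |a j * (V j - W j)| :=
            Finset.abs_sum_le_sum_abs _ _
        _ ≤ ∑ j, a j * dist V W := by
            apply Finset.sum_le_sum
            intro j _
            rw [abs_mul, abs_of_nonneg (ha0 j)]
            apply mul_le_mul_of_nonneg_left _ (ha0 j)
            rw [← Real.dist_eq]
            exact dist_le_pi_dist V W j
        _ = M * dist V W := by rw [← Finset.sum_mul, hasum]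
    set K : NNReal := ⟨M / (α + M), div_nonneg hM0.le hαM.le⟩ with hKdef
    have hKcoe : (K : ℝ) = M / (α + M) := rfl
    have hK1 : K < 1 := by
      rw [← NNReal.coe_lt_coe, hKcoe, NNReal.coe_one]
      rw [div_lt_one hαM]
      linarith
    have hFlip : LipschitzWith K F := by
      apply LipschitzWith.of_dist_le_mul
      intro V W
      rw [hKcoe]
      rw [dist_pi_le_iff (mul_nonneg (div_nonneg hM0.le hαM.le) dist_nonneg)]
      intro i
      rw [Real.dist_eq]
      simp only [hFdef]
      have h1 : (α + M)⁻¹ * sInf (Set.range fun u => (∑ j, q i j u * V j + r i u) + M * V i)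
          - (α + M)⁻¹ * sInf (Set.range fun u => (∑ j, q i j u * W j + r i u) + M * W i)
          = (α + M)⁻¹ * (sInf (Set.range fun u => (∑ j, q i j u * V j + r i u) + M * V i)
            - sInf (Set.range fun u => (∑ j, q i j u * W j + r i u) + M * W i)) := by ring
      rw [h1, abs_mul, abs_of_nonneg (le_of_lt (inv_pos.2 hαM))]
      calc (α + M)⁻¹ * |sInf (Set.range fun u => (∑ j, q i j u * V j + r i u) + M * V i)
            - sInf (Set.range fun u => (∑ j, q i j u * W j + r i u) + M * W i)|
          ≤ (α + M)⁻¹ * (M * dist V W) :=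
            mul_le_mul_of_nonneg_left (hstep V W i) (le_of_lt (inv_pos.2 hαM))
        _ = M / (α + M) * dist V W := by ring
    have hcontr : ContractingWith K F := ⟨hK1, hFlip⟩
    obtain ⟨V, hfix, -⟩ := hcontr.exists_fixedPoint (fun _ => (0:ℝ)) (edist_ne_top _ _)
    refine ⟨V, fun i => ?_⟩
    have h1 : V i = (α + M)⁻¹ * (T V i + M * V i) := by
      conv_lhs => rw [← hfix]
      exact hFval V i
    have h3 := congrArg (fun x => (α + M) * x) h1
    rw [← mul_assoc, mul_inv_cancel₀ (ne_of_gt hαM), one_mul] at h3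
    linarith
  -- recursive span constants
  set cs : ℕ → ℝ := hjbCs R QM (N : ℝ) (δ * ε) with hcsdef
  have hcs0eq : cs 0 = 0 := hjbCs_zero R QM (N : ℝ) (δ * ε)
  have hcssucc : ∀ k, cs (k + 1) = cs k + (2 * R + (N : ℝ) * QM * cs k) / (δ * ε) :=
    fun k => hjbCs_succ R QM (N : ℝ) (δ * ε) k
  have hcs0 : ∀ k, 0 ≤ cs k := by
    intro k
    induction k with
    | zero => rw [hcs0eq]
    | succ k ih =>
      rw [hcssucc k]
      have h1 : 0 ≤ (2 * R + (N : ℝ) * QM * cs k) / (δ * ε) :=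
        div_nonneg (by nlinarith [hR0, hQM0, ih, Nat.cast_nonneg (α := ℝ) N])
          (mul_pos hδ hε0).le
      linarith
  have hcsmono : ∀ k, cs k ≤ cs (k + 1) := by
    intro k
    rw [hcssucc k]
    have h1 : 0 ≤ (2 * R + (N : ℝ) * QM * cs k) / (δ * ε) :=
      div_nonneg (by nlinarith [hR0, hQM0, hcs0 k, Nat.cast_nonneg (α := ℝ) N])
        (mul_pos hδ hε0).le
    linarith
  -- the per-discount package
  have key : ∀ α : ℝ, 0 < α → ∃ V : Fin N → ℝ,
      (∀ i, α * V i = T V i) ∧ (∀ i, |α * V i| ≤ R) ∧ (∀ i j, V i - V j ≤ cs (N - 1)) := by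
    intro α hα
    obtain ⟨V, hfix⟩ := existsfix α hα
    have heq : ∀ i : Fin N, ∃ u, α * V i = ∑ j, q i j u * (V j - V i) + r i u := by
      intro i
      obtain ⟨u, -, hmin⟩ := hjb_exists_min _ (hcont V i)
      refine ⟨u, ?_⟩
      rw [hfix i]
      simp only [hTdef]
      rw [hmin]
      show ∑ j, q i j u * V j + r i u = _
      rw [hrow V i u]
    obtain ⟨imax, -, himax⟩ := Finset.exists_max_image Finset.univ V Finset.univ_nonempty
    obtain ⟨imin, -, himin⟩ := Finset.exists_min_image Finset.univ V Finset.univ_nonempty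
    have himax' : ∀ j, V j ≤ V imax := fun j => himax j (Finset.mem_univ j)
    have himin' : ∀ j, V imin ≤ V j := fun j => himin j (Finset.mem_univ j)
    have hup : α * V imax ≤ R := by
      obtain ⟨u, hu⟩ := heq imax
      have hsum : ∑ j, q imax j u * (V j - V imax) ≤ 0 := by
        apply Finset.sum_nonpos
        intro j _
        rcases eq_or_ne j imax with rfl | hj
        · simp
        · have h1 := hqoff imax j (Ne.symm hj) u
          have h2 := himax' j
          nlinarith
      have h3 := (abs_le.1 (hrle imax u)).2
      linarith
    have hlo : -R ≤ α * V imin := by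
      obtain ⟨u, hu⟩ := heq imin
      have hsum : 0 ≤ ∑ j, q imin j u * (V j - V imin) := by
        apply Finset.sum_nonneg
        intro j _
        rcases eq_or_ne j imin with rfl | hj
        · simp
        · have h1 := hqoff imin j (Ne.symm hj) u
          have h2 := himin' j
          nlinarith
      have h3 := (abs_le.1 (hrle imin u)).1
      linarith
    have hbd : ∀ i, |α * V i| ≤ R := by
      intro i
      rw [abs_le]
      constructor
      · calc -R ≤ α * V imin := hlo
          _ ≤ α * V i := mul_le_mul_of_nonneg_left (himin' i) hα.le
      · calc α * V i ≤ α * V imax := mul_le_mul_of_nonneg_left (himax' i) hα.le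
          _ ≤ R := hup
    have claim : ∀ k : ℕ, k + 1 ≤ N →
        k + 1 ≤ (Finset.univ.filter fun i => V imax - V i ≤ cs k).card := by
      intro k
      induction k with
      | zero =>
        intro _
        have hmem : imax ∈ Finset.univ.filter fun i => V imax - V i ≤ cs 0 :=
          Finset.mem_filter.2 ⟨Finset.mem_univ _, by rw [hcs0eq]; simp⟩
        exact Finset.card_pos.2 ⟨imax, hmem⟩
      | succ k ih =>
        intro hk1
        have hcard := ih (by omega)
        by_cases hSuniv : (Finset.univ.filter fun i => V imax - V i ≤ cs k) = Finset.univ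
        · have hall : (Finset.univ.filter fun i => V imax - V i ≤ cs (k + 1)) = Finset.univ := by
            apply Finset.eq_univ_of_forall
            intro i
            have hi : i ∈ (Finset.univ.filter fun i => V imax - V i ≤ cs k) := by
              rw [hSuniv]; exact Finset.mem_univ i
            exact Finset.mem_filter.2
              ⟨Finset.mem_univ _, (Finset.mem_filter.1 hi).2.trans (hcsmono k)⟩
          rw [hall, Finset.card_univ, Fintype.card_fin]
          omega
        · have hSne : (↑(Finset.univ.filter fun i => V imax - V i ≤ cs k) :
              Set (Fin N)).Nonempty := by
            have hpos : 0 < (Finset.univ.filter fun i => V imax - V i ≤ cs k).card := by omega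
            obtain ⟨x, hx⟩ := Finset.card_pos.1 hpos
            exact ⟨x, hx⟩
          have hSne2 : (↑(Finset.univ.filter fun i => V imax - V i ≤ cs k) :
              Set (Fin N)) ≠ Set.univ := by
            intro hcontra
            apply hSuniv
            apply Finset.coe_injective
            rw [hcontra, Finset.coe_univ]
          obtain ⟨i, hiS, j, hjS, hqb2⟩ := hirr _ hSne hSne2
          have hiS' : i ∈ (Finset.univ.filter fun i => V imax - V i ≤ cs k) := hiS
          have hjS' : j ∉ (Finset.univ.filter fun i => V imax - V i ≤ cs k) := hjS
          have hij : i ≠ j := fun h => hjS' (h ▸ hiS')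
          have hqeps : ∀ u, δ * ε ≤ q i j u := fun u =>
            le_trans (mul_le_mul_of_nonneg_left (hεle i j hqb2) hδ.le) (hminor i j hij u)
          have hiboundV : V imax - V i ≤ cs k := (Finset.mem_filter.1 hiS').2
          have hjboundV : cs k < V imax - V j := by
            by_contra hcon
            exact hjS' (Finset.mem_filter.2 ⟨Finset.mem_univ _, not_lt.1 hcon⟩)
          obtain ⟨u, hu⟩ := heq i
          have hlow : -(2 * R) ≤ ∑ j', q i j' u * (V j' - V i) := by
            have h1 := (abs_le.1 (hbd i)).1
            have h2 := (abs_le.1 (hrle i u)).2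
            linarith
          have hsplit : ∑ j', q i j' u * (V j' - V i)
              = (∑ j' ∈ Finset.univ.filter (fun j' => V imax - V j' ≤ cs k),
                  q i j' u * (V j' - V i))
                + ∑ j' ∈ Finset.univ.filter (fun j' => ¬(V imax - V j' ≤ cs k)),
                  q i j' u * (V j' - V i) :=
            (Finset.sum_filter_add_sum_filter_not _ _ _).symm
          have hbound1 : (∑ j' ∈ Finset.univ.filter (fun j' => V imax - V j' ≤ cs k),
              q i j' u * (V j' - V i)) ≤ (N : ℝ) * QM * cs k := by
            calc (∑ j' ∈ Finset.univ.filter (fun j' => V imax - V j' ≤ cs k),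
                q i j' u * (V j' - V i))
                ≤ ∑ _j' ∈ Finset.univ.filter (fun j' => V imax - V j' ≤ cs k), QM * cs k := by
                  apply Finset.sum_le_sum
                  intro j' _
                  rcases eq_or_ne j' i with rfl | hj'
                  · rw [sub_self, mul_zero]
                    exact mul_nonneg hQM0 (hcs0 k)
                  · have h1 := hqoff i j' (Ne.symm hj') u
                    have h2 := hqle i j' u
                    have h3 : V j' - V i ≤ cs k := by
                      have h4 := himax' j'
                      linarith
                    rcases le_or_gt (V j' - V i) 0 with hx | hx
                    · exact le_trans (mul_nonpos_iff.2 (Or.inl ⟨h1, hx⟩))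
                        (mul_nonneg hQM0 (hcs0 k))
                    · calc q i j' u * (V j' - V i) ≤ QM * (V j' - V i) :=
                          mul_le_mul_of_nonneg_right h2 hx.le
                        _ ≤ QM * cs k := mul_le_mul_of_nonneg_left h3 hQM0
              _ = ((Finset.univ.filter fun j' => V imax - V j' ≤ cs k).card : ℝ)
                    * (QM * cs k) := by rw [Finset.sum_const, nsmul_eq_mul]
              _ ≤ (N : ℝ) * QM * cs k := by
                  rw [mul_assoc]
                  apply mul_le_mul_of_nonneg_right _ (mul_nonneg hQM0 (hcs0 k))
                  have hcle : (Finset.univ.filter fun j' => V imax - V j' ≤ cs k).card ≤ N := by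
                    have h5 := Finset.card_le_card
                      (Finset.subset_univ (Finset.univ.filter fun j' => V imax - V j' ≤ cs k))
                    rw [Finset.card_univ, Fintype.card_fin] at h5
                    exact h5
                  exact_mod_cast hcle
          have hbound2 : (∑ j' ∈ Finset.univ.filter (fun j' => ¬(V imax - V j' ≤ cs k)),
              q i j' u * (V j' - V i)) ≤ δ * ε * (V j - V i) := by
            have hjmem : j ∈ Finset.univ.filter (fun j' => ¬(V imax - V j' ≤ cs k)) :=
              Finset.mem_filter.2 ⟨Finset.mem_univ _, not_le.2 hjboundV⟩
            have hsub : ({j} : Finset (Fin N)) ⊆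
                Finset.univ.filter (fun j' => ¬(V imax - V j' ≤ cs k)) :=
              Finset.singleton_subset_iff.2 hjmem
            have hAux := Finset.sum_le_sum_of_subset_of_nonneg
              (f := fun j' => -(q i j' u * (V j' - V i))) hsub ?_
            · rw [Finset.sum_singleton] at hAux
              rw [Finset.sum_neg_distrib] at hAux
              have h2 : V j - V i < 0 := by linarith
              have h1 := hqeps u
              have h6 : (∑ j' ∈ Finset.univ.filter (fun j' => ¬(V imax - V j' ≤ cs k)),
                  q i j' u * (V j' - V i)) ≤ q i j u * (V j - V i) := by linarith
              nlinarith
            · intro x hx hxj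
              have hxS := (Finset.mem_filter.1 hx).2
              have hxi : x ≠ i := by
                intro hcontra
                exact hxS (hcontra ▸ hiboundV)
              have h1 := hqoff i x (Ne.symm hxi) u
              have h2 : V x - V i < 0 := by
                have h3 := not_le.1 hxS
                linarith
              rw [neg_nonneg]
              exact mul_nonpos_iff.2 (Or.inl ⟨h1, h2.le⟩)
          have hVij : V i - V j ≤ (2 * R + (N : ℝ) * QM * cs k) / (δ * ε) := by
            rw [le_div_iff₀ (mul_pos hδ hε0)]
            nlinarith
          have hjnew : V imax - V j ≤ cs (k + 1) := by
            rw [hcssucc k]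
            linarith
          have hsub2 : insert j (Finset.univ.filter fun i => V imax - V i ≤ cs k)
              ⊆ Finset.univ.filter fun i => V imax - V i ≤ cs (k + 1) := by
            intro x hx
            rcases Finset.mem_insert.1 hx with rfl | hxS
            · exact Finset.mem_filter.2 ⟨Finset.mem_univ _, hjnew⟩
            · exact Finset.mem_filter.2
                ⟨Finset.mem_univ _, ((Finset.mem_filter.1 hxS).2).trans (hcsmono k)⟩
          have hcard2 := Finset.card_le_card hsub2
          rw [Finset.card_insert_of_notMem hjS'] at hcard2
          omega
    have hfull : (Finset.univ.filter fun i => V imax - V i ≤ cs (N - 1)) = Finset.univ := by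
      apply Finset.eq_univ_of_card
      have h1 := claim (N - 1) (by omega)
      have h2 := Finset.card_le_card
        (Finset.subset_univ (Finset.univ.filter fun i => V imax - V i ≤ cs (N - 1)))
      rw [Finset.card_univ, Fintype.card_fin] at h2
      rw [Fintype.card_fin]
      omega
    refine ⟨V, hfix, hbd, ?_⟩
    intro i j
    have hj2 : j ∈ Finset.univ.filter fun i => V imax - V i ≤ cs (N - 1) := by
      rw [hfull]; exact Finset.mem_univ j
    have hj3 := (Finset.mem_filter.1 hj2).2
    have hi3 := himax' i
    linarith
  -- vanishing discount limit
  have hpos : ∀ n : ℕ, (0 : ℝ) < ((n : ℝ) + 1)⁻¹ := fun n => by positivity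
  choose Vn hfixn hbdn hspann using fun n : ℕ => key ((n : ℝ) + 1)⁻¹ (hpos n)
  set ilast : Fin N := ⟨N - 1, by omega⟩ with hilast
  set Wn : ℕ → Fin N → ℝ := fun n i => Vn n i - Vn n ilast with hWdef
  set bn : ℕ → ℝ := fun n => ((n : ℝ) + 1)⁻¹ * Vn n ilast with hbndef
  have hC0 : 0 ≤ cs (N - 1) := hcs0 _
  have hWbd : ∀ n i, |Wn n i| ≤ cs (N - 1) := by
    intro n i
    rw [abs_le]
    constructor
    · have h1 := hspann n ilast i
      simp only [hWdef]
      linarith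
    · have h1 := hspann n i ilast
      simp only [hWdef]
      linarith
  have hmem : ∀ n : ℕ, ((Wn n, bn n) : (Fin N → ℝ) × ℝ)
      ∈ (Metric.closedBall (0 : Fin N → ℝ) (cs (N - 1))) ×ˢ (Metric.closedBall (0 : ℝ) R) := by
    intro n
    constructor
    · rw [Metric.mem_closedBall, dist_pi_le_iff hC0]
      intro i
      rw [Real.dist_eq, Pi.zero_apply, sub_zero]
      exact hWbd n i
    · rw [Metric.mem_closedBall, Real.dist_eq, sub_zero]
      exact hbdn n ilast
  have hcomp : IsCompact ((Metric.closedBall (0 : Fin N → ℝ) (cs (N - 1)))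
      ×ˢ (Metric.closedBall (0 : ℝ) R)) :=
    (isCompact_closedBall _ _).prod (isCompact_closedBall _ _)
  obtain ⟨⟨Vst, β⟩, -, φ, hφ, hconv⟩ :=
    hcomp.tendsto_subseq (x := fun n => ((Wn n, bn n) : (Fin N → ℝ) × ℝ)) hmem
  have hWconv : Filter.Tendsto (fun m => Wn (φ m)) Filter.atTop (nhds Vst) :=
    (continuous_fst.tendsto _).comp hconv
  have hbconv : Filter.Tendsto (fun m => bn (φ m)) Filter.atTop (nhds β) :=
    (continuous_snd.tendsto _).comp hconv
  have hWi : ∀ i, Filter.Tendsto (fun m => Wn (φ m) i) Filter.atTop (nhds (Vst i)) :=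
    fun i => ((continuous_apply i).tendsto _).comp hWconv
  have hlast : Vst ilast = 0 := by
    have h1 := hWi ilast
    have h2 : (fun m => Wn (φ m) ilast) = fun _ => (0 : ℝ) := by
      funext m
      simp [hWdef]
    rw [h2] at h1
    exact tendsto_nhds_unique h1 tendsto_const_nhds
  have hTW : ∀ n i, T (Wn n) i = ((n : ℝ) + 1)⁻¹ * Wn n i + bn n := by
    intro n i
    have h1 : T (Wn n) i = T (Vn n) i := by
      have h2 : Wn n = fun j => Vn n j + (-(Vn n ilast)) := by
        funext j
        simp only [hWdef]
        ring
      rw [h2]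
      exact hTshift (Vn n) (-(Vn n ilast)) i
    rw [h1, ← hfixn n i]
    simp only [hWdef, hbndef]
    ring
  have hsolT : ∀ i, T Vst i = β := by
    intro i
    have hLHS : Filter.Tendsto (fun m => T (Wn (φ m)) i) Filter.atTop (nhds (T Vst i)) := by
      rw [tendsto_iff_dist_tendsto_zero]
      apply squeeze_zero (g := fun m => L * dist (Wn (φ m)) Vst) (fun m => dist_nonneg)
      · intro m
        rw [Real.dist_eq]
        exact hTlip (Wn (φ m)) Vst i
      · have h3 : Filter.Tendsto (fun m => dist (Wn (φ m)) Vst) Filter.atTop (nhds 0) :=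
          tendsto_iff_dist_tendsto_zero.1 hWconv
        have h4 := h3.const_mul L
        simpa using h4
    have hRHS : Filter.Tendsto (fun m => ((φ m : ℝ) + 1)⁻¹ * Wn (φ m) i + bn (φ m))
        Filter.atTop (nhds (0 + β)) := by
      refine Filter.Tendsto.add ?_ hbconv
      have hbound : ∀ m : ℕ, ‖((φ m : ℝ) + 1)⁻¹ * Wn (φ m) i‖
          ≤ ((m : ℝ) + 1)⁻¹ * cs (N - 1) := by
        intro m
        rw [Real.norm_eq_abs, abs_mul, abs_of_pos (hpos (φ m))]
        have hmono : ((φ m : ℝ) + 1)⁻¹ ≤ ((m : ℝ) + 1)⁻¹ := by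
          apply inv_anti₀ (by positivity)
          have hle : m ≤ φ m := hφ.le_apply
          have hle2 : ((m : ℝ)) ≤ ((φ m : ℝ)) := by exact_mod_cast hle
          linarith
        calc ((φ m : ℝ) + 1)⁻¹ * |Wn (φ m) i| ≤ ((φ m : ℝ) + 1)⁻¹ * cs (N - 1) :=
              mul_le_mul_of_nonneg_left (hWbd (φ m) i) (hpos (φ m)).le
          _ ≤ ((m : ℝ) + 1)⁻¹ * cs (N - 1) := mul_le_mul_of_nonneg_right hmono hC0
      have htend : Filter.Tendsto (fun m : ℕ => ((m : ℝ) + 1)⁻¹ * cs (N - 1))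
          Filter.atTop (nhds 0) := by
        have h5 : Filter.Tendsto (fun m : ℕ => ((m : ℝ) + 1)⁻¹) Filter.atTop (nhds 0) := by
          have h5b := tendsto_one_div_add_atTop_nhds_zero_nat (𝕜 := ℝ)
          simpa [one_div] using h5b
        have h6 := h5.mul_const (cs (N - 1))
        simpa using h6
      exact squeeze_zero_norm hbound htend
    have heqfun : (fun m => T (Wn (φ m)) i)
        = fun m => ((φ m : ℝ) + 1)⁻¹ * Wn (φ m) i + bn (φ m) :=
      funext fun m => hTW (φ m) i
    rw [heqfun] at hLHS
    have h7 := tendsto_nhds_unique hLHS hRHS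
    rw [zero_add] at h7
    exact h7
  -- comparison of solutions
  have cmp : ∀ (V1 : Fin N → ℝ) (b1 : ℝ), (∀ i, T V1 i = b1) →
      ∀ (V2 : Fin N → ℝ) (b2 : ℝ), (∀ i, T V2 i = b2) → b2 ≤ b1 := by
    intro V1 b1 h1 V2 b2 h2
    obtain ⟨i0, -, hi0⟩ := Finset.exists_min_image Finset.univ (fun i => V1 i - V2 i)
      Finset.univ_nonempty
    have hi0' : ∀ j, V1 i0 - V2 i0 ≤ V1 j - V2 j := fun j => hi0 j (Finset.mem_univ j)
    obtain ⟨u, -, hmin⟩ := hjb_exists_min _ (hcont V1 i0)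
    have e1 : b1 = ∑ j, q i0 j u * V1 j + r i0 u := by
      rw [← h1 i0]
      simp only [hTdef]
      exact hmin
    have e2 : b2 ≤ ∑ j, q i0 j u * V2 j + r i0 u := by
      rw [← h2 i0]
      simp only [hTdef]
      exact hjb_sInf_le (hcont V2 i0) u
    have e4 : ∑ j, q i0 j u * V1 j - ∑ j, q i0 j u * V2 j
        = ∑ j, q i0 j u * ((V1 j - V2 j) - (V1 i0 - V2 i0)) := by
      have e5 := hrow (fun i => V1 i - V2 i) i0 u
      rw [← e5, ← Finset.sum_sub_distrib]
      exact Finset.sum_congr rfl fun j _ => by ring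
    have e6 : 0 ≤ ∑ j, q i0 j u * ((V1 j - V2 j) - (V1 i0 - V2 i0)) := by
      apply Finset.sum_nonneg
      intro j _
      rcases eq_or_ne j i0 with rfl | hj
      · simp
      · exact mul_nonneg (hqoff i0 j (Ne.symm hj) u) (by linarith [hi0' j])
    linarith
  -- solutions differ by a constant
  have const : ∀ (V1 : Fin N → ℝ) (b1 : ℝ), (∀ i, T V1 i = b1) →
      ∀ (V2 : Fin N → ℝ) (b2 : ℝ), (∀ i, T V2 i = b2) → ∃ c : ℝ, ∀ i, V1 i = V2 i + c := by
    intro V1 b1 h1 V2 b2 h2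
    have hbb : b1 = b2 := le_antisymm (cmp V2 b2 h2 V1 b1 h1) (cmp V1 b1 h1 V2 b2 h2)
    obtain ⟨i0, -, hi0⟩ := Finset.exists_min_image Finset.univ (fun i => V1 i - V2 i)
      Finset.univ_nonempty
    have hi0' : ∀ j, V1 i0 - V2 i0 ≤ V1 j - V2 j := fun j => hi0 j (Finset.mem_univ j)
    have hSuniv : {i : Fin N | V1 i - V2 i ≤ V1 i0 - V2 i0} = Set.univ := by
      by_contra hne
      obtain ⟨i, hiS, j, hjS, hqb2⟩ := hirr {i : Fin N | V1 i - V2 i ≤ V1 i0 - V2 i0}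
        ⟨i0, le_refl (V1 i0 - V2 i0)⟩ hne
      have hiS2 : V1 i - V2 i ≤ V1 i0 - V2 i0 := hiS
      have hieq : V1 i - V2 i = V1 i0 - V2 i0 := le_antisymm hiS2 (hi0' i)
      have hjS2 : V1 i0 - V2 i0 < V1 j - V2 j := not_le.1 hjS
      have hij : i ≠ j := fun h => hjS (h ▸ hiS)
      obtain ⟨u, -, hmin⟩ := hjb_exists_min _ (hcont V1 i)
      have e1 : b1 = ∑ j', q i j' u * V1 j' + r i u := by
        rw [← h1 i]
        simp only [hTdef]
        exact hmin
      have e2 : b2 ≤ ∑ j', q i j' u * V2 j' + r i u := by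
        rw [← h2 i]
        simp only [hTdef]
        exact hjb_sInf_le (hcont V2 i) u
      have e4 : ∑ j', q i j' u * V1 j' - ∑ j', q i j' u * V2 j'
          = ∑ j', q i j' u * ((V1 j' - V2 j') - (V1 i - V2 i)) := by
        have e5 := hrow (fun i => V1 i - V2 i) i u
        rw [← e5, ← Finset.sum_sub_distrib]
        exact Finset.sum_congr rfl fun j' _ => by ring
      have hterm : ∀ j', 0 ≤ q i j' u * ((V1 j' - V2 j') - (V1 i - V2 i)) := by
        intro j'
        rcases eq_or_ne j' i with rfl | hj'
        · simp
        · apply mul_nonneg (hqoff i j' (Ne.symm hj') u)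
          have h6 := hi0' j'
          linarith
      have hsingle : q i j u * ((V1 j - V2 j) - (V1 i - V2 i))
          ≤ ∑ j', q i j' u * ((V1 j' - V2 j') - (V1 i - V2 i)) :=
        Finset.single_le_sum (fun j' _ => hterm j') (Finset.mem_univ j)
      have hqeps : δ * ε ≤ q i j u :=
        le_trans (mul_le_mul_of_nonneg_left (hεle i j hqb2) hδ.le) (hminor i j hij u)
      have hpos2 : 0 < q i j u * ((V1 j - V2 j) - (V1 i - V2 i)) :=
        mul_pos (lt_of_lt_of_le (mul_pos hδ hε0) hqeps) (by linarith)
      linarith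
    refine ⟨V1 i0 - V2 i0, fun i => ?_⟩
    have hiS : i ∈ {i : Fin N | V1 i - V2 i ≤ V1 i0 - V2 i0} := by
      rw [hSuniv]
      exact Set.mem_univ i
    have h8 : V1 i - V2 i ≤ V1 i0 - V2 i0 := hiS
    have h9 := hi0' i
    linarith
  -- conclusion
  refine ⟨Vst, β, hlast, ?_, ?_⟩
  · intro i
    have h10 := hsolT i
    simp only [hTdef] at h10
    exact h10
  · intro V β' hV
    have hVT : ∀ i, T V i = β' := by
      intro i
      simp only [hTdef]
      exact hV i
    constructor
    · exact le_antisymm (cmp Vst β hsolT V β' hVT) (cmp V β' hVT Vst β hsolT)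
    · obtain ⟨c, hc⟩ := const V β' hVT Vst β hsolT
      exact ⟨c, funext hc⟩
end
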